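/- arXiv:2212.12251 — 4 statements merged into one kernel-verified Lean document; each statement's English description precedes it below -/
import Mathlib

section
/- Arrow's Impossibility Theorem: If there are at least 3 alternatives and finitely many (at least 2) individuals, then any social welfare function (mapping profiles of strict linear orders on the alternatives to a strict linear order) satisfying the Pareto condition and Independence of Irrelevant Alternatives has a dictator, i.e., an individual whose strict preference over every pair of alternatives is always replicated by the social preference. -/
/-- A strict linear order (complete, transitive, irreflexive preference) on `X`. -/
def SLO (X : Type*) : Type _ := {r : X → X → Prop // IsStrictTotalOrder X r}

/-- Pareto: unanimous strict preference is replicated socially. -/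
def Pareto {X ι : Type*} (f : (ι → SLO X) → SLO X) : Prop :=
  ∀ P : ι → SLO X, ∀ a b : X, (∀ i, (P i).1 a b) → (f P).1 a b

/-- Independence of irrelevant alternatives. -/
def IIA {X ι : Type*} (f : (ι → SLO X) → SLO X) : Prop :=
  ∀ P P' : ι → SLO X, ∀ a b : X,
    (∀ i, (P i).1 a b ↔ (P' i).1 a b) → ((f P).1 a b ↔ (f P').1 a b)

/-- A coalition `D` is `(a,b)`-decisive. -/
def PairDecisive {X ι : Type*} (f : (ι → SLO X) → SLO X) (D : Set ι) (a b : X) : Prop :=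
  ∀ P : ι → SLO X, (∀ i ∈ D, (P i).1 a b) → (f P).1 a b

/-- A coalition is decisive if it is `(a,b)`-decisive for all distinct `a, b`. -/
def Decisive {X ι : Type*} (f : (ι → SLO X) → SLO X) (D : Set ι) : Prop :=
  ∀ a b : X, a ≠ b → PairDecisive f D a b

/-- `d` is a dictator for `f`. -/
def IsDictator {X ι : Type*} (f : (ι → SLO X) → SLO X) (d : ι) : Prop :=
  ∀ P : ι → SLO X, ∀ a b : X, (P d).1 a b → (f P).1 a b

section ArrowAux

variable {X ι : Type*}

/- Basic facts about strict total orders packaged as `SLO`. -/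
lemma SLO.trans' (r : SLO X) {x y z : X} (h1 : r.1 x y) (h2 : r.1 y z) : r.1 x z := by
  haveI := r.2
  exact _root_.trans_of r.1 h1 h2

lemma SLO.irrefl' (r : SLO X) (x : X) : ¬ r.1 x x := by
  haveI := r.2
  exact irrefl_of r.1 x

lemma SLO.asymm' (r : SLO X) {x y : X} (h : r.1 x y) : ¬ r.1 y x :=
  fun h' => r.irrefl' x (r.trans' h h')

lemma SLO.trichotomy (r : SLO X) (x y : X) : r.1 x y ∨ x = y ∨ r.1 y x := by
  haveI := r.2
  exact trichotomous_of r.1 x y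

/- Building an `SLO` from an injective ℕ-valued map. -/
def SLO.ofInj (u : X → ℕ) (hu : Function.Injective u) : SLO X :=
  ⟨fun x y => u x < u y,
   { trichotomous := fun x y h1 h2 => by
       rcases lt_trichotomy (u x) (u y) with h | h | h
       · exact absurd h h1
       · exact hu h
       · exact absurd h h2
     irrefl := fun x => lt_irrefl _
     trans := fun x y z h1 h2 => lt_trans h1 h2 }⟩

lemma SLO.ofInj_iff (u : X → ℕ) (hu : Function.Injective u) (x y : X) :
    (SLO.ofInj u hu).1 x y ↔ u x < u y := Iff.rfl

/- The ranking function placing `a > b > c` on top. -/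
noncomputable def mku [Fintype X] (a b c : X) : X → ℕ :=
  letI := Classical.decEq X
  fun x => if x = a then 0 else if x = b then 1 else if x = c then 2
    else 3 + (Fintype.equivFin X x : ℕ)

lemma mku_a [Fintype X] (a b c : X) : mku a b c a = 0 := by
  simp [mku]

lemma mku_b [Fintype X] {a b : X} (c : X) (hab : a ≠ b) : mku a b c b = 1 := by
  simp [mku, Ne.symm hab]

lemma mku_c [Fintype X] {a b c : X} (hac : a ≠ c) (hbc : b ≠ c) : mku a b c c = 2 := by
  simp [mku, Ne.symm hac, Ne.symm hbc]

lemma mku_inj [Fintype X] {a b c : X} (hab : a ≠ b) (hac : a ≠ c) (hbc : b ≠ c) :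
    Function.Injective (mku a b c) := by
  classical
  intro x y h
  simp only [mku] at h
  split_ifs at h <;>
    first
      | (subst_vars; rfl)
      | omega
      | (exact (Fintype.equivFin X).injective (Fin.val_injective (by omega)))

/-- The order `a > b > c > (everything else)`. -/
noncomputable def mk3 [Fintype X] (a b c : X) (hab : a ≠ b) (hac : a ≠ c) (hbc : b ≠ c) :
    SLO X :=
  SLO.ofInj (mku a b c) (mku_inj hab hac hbc)

lemma mk3_12 [Fintype X] {a b c : X} (hab : a ≠ b) (hac : a ≠ c) (hbc : b ≠ c) :
    (mk3 a b c hab hac hbc).1 a b := by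
  show mku a b c a < mku a b c b
  rw [mku_a, mku_b c hab]; omega

lemma mk3_13 [Fintype X] {a b c : X} (hab : a ≠ b) (hac : a ≠ c) (hbc : b ≠ c) :
    (mk3 a b c hab hac hbc).1 a c := by
  show mku a b c a < mku a b c c
  rw [mku_a, mku_c hac hbc]; omega

lemma mk3_23 [Fintype X] {a b c : X} (hab : a ≠ b) (hac : a ≠ c) (hbc : b ≠ c) :
    (mk3 a b c hab hac hbc).1 b c := by
  show mku a b c b < mku a b c c
  rw [mku_b c hab, mku_c hac hbc]; omega

lemma exists_third [Fintype X] (hX : 3 ≤ Fintype.card X) (a b : X) :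
    ∃ c : X, c ≠ a ∧ c ≠ b := by
  classical
  have hcard : ({a, b} : Finset X).card ≤ 2 :=
    (Finset.card_insert_le _ _).trans (by simp)
  have hne : (Finset.univ \ ({a, b} : Finset X)).Nonempty := by
    rw [← Finset.card_pos, Finset.card_sdiff, Finset.inter_univ, Finset.card_univ]
    omega
  obtain ⟨c, hc⟩ := hne
  simp only [Finset.mem_sdiff, Finset.mem_univ, Finset.mem_insert, Finset.mem_singleton,
    true_and, not_or] at hc
  exact ⟨c, hc.1, hc.2⟩

/-- Weak (a,b)-decisiveness: if everyone in `D` prefers `a` to `b` and everyone outside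
prefers `b` to `a`, then society prefers `a` to `b`. -/
def WeakDec (f : (ι → SLO X) → SLO X) (D : Set ι) (a b : X) : Prop :=
  ∀ P : ι → SLO X, (∀ i ∈ D, (P i).1 a b) → (∀ i ∉ D, (P i).1 b a) → (f P).1 a b

lemma pairDecisive_weakDec {f : (ι → SLO X) → SLO X} {D : Set ι} {a b : X}
    (h : PairDecisive f D a b) : WeakDec f D a b :=
  fun P h1 _ => h P h1

lemma expand1 [Fintype X] {f : (ι → SLO X) → SLO X} (hP : Pareto f) (hI : IIA f)
    {D : Set ι} {a b c : X} (hab : a ≠ b) (hac : a ≠ c) (hbc : b ≠ c)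
    (hw : WeakDec f D a b) : PairDecisive f D a c := by
  classical
  intro P hPD
  set P' : ι → SLO X := fun i =>
    if i ∈ D then mk3 a b c hab hac hbc
    else if (P i).1 a c then mk3 b a c (Ne.symm hab) hbc hac
    else mk3 b c a hbc (Ne.symm hab) (Ne.symm hac) with hP'
  have h1 : (f P').1 a b := by
    apply hw P'
    · intro i hi
      simp only [hP', if_pos hi]
      exact mk3_12 hab hac hbc
    · intro i hi
      simp only [hP', if_neg hi]
      split_ifs with h
      · exact mk3_12 (Ne.symm hab) hbc hac
      · exact mk3_13 hbc (Ne.symm hab) (Ne.symm hac)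
  have h2 : (f P').1 b c := by
    apply hP P' b c
    intro i
    by_cases hi : i ∈ D
    · simp only [hP', if_pos hi]
      exact mk3_23 hab hac hbc
    · simp only [hP', if_neg hi]
      split_ifs with h
      · exact mk3_13 (Ne.symm hab) hbc hac
      · exact mk3_12 hbc (Ne.symm hab) (Ne.symm hac)
  have h3 : (f P').1 a c := (f P').trans' h1 h2
  refine (hI P P' a c ?_).mpr h3
  intro i
  by_cases hi : i ∈ D
  · simp only [hP', if_pos hi]
    exact iff_of_true (hPD i hi) (mk3_13 hab hac hbc)
  · simp only [hP', if_neg hi]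
    by_cases h : (P i).1 a c
    · rw [if_pos h]
      exact iff_of_true h (mk3_23 (Ne.symm hab) hbc hac)
    · rw [if_neg h]
      refine iff_of_false h ?_
      exact (mk3 b c a hbc (Ne.symm hab) (Ne.symm hac)).asymm'
        (mk3_23 hbc (Ne.symm hab) (Ne.symm hac))

lemma expand2 [Fintype X] {f : (ι → SLO X) → SLO X} (hP : Pareto f) (hI : IIA f)
    {D : Set ι} {a b c : X} (hab : a ≠ b) (hac : a ≠ c) (hbc : b ≠ c)
    (hw : WeakDec f D a b) : PairDecisive f D c b := by
  classical
  intro P hPD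
  set P' : ι → SLO X := fun i =>
    if i ∈ D then mk3 c a b (Ne.symm hac) (Ne.symm hbc) hab
    else if (P i).1 c b then mk3 c b a (Ne.symm hbc) (Ne.symm hac) (Ne.symm hab)
    else mk3 b c a hbc (Ne.symm hab) (Ne.symm hac) with hP'
  have h1 : (f P').1 c a := by
    apply hP P' c a
    intro i
    by_cases hi : i ∈ D
    · simp only [hP', if_pos hi]
      exact mk3_12 (Ne.symm hac) (Ne.symm hbc) hab
    · simp only [hP', if_neg hi]
      split_ifs with h
      · exact mk3_13 (Ne.symm hbc) (Ne.symm hac) (Ne.symm hab)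
      · exact mk3_23 hbc (Ne.symm hab) (Ne.symm hac)
  have h2 : (f P').1 a b := by
    apply hw P'
    · intro i hi
      simp only [hP', if_pos hi]
      exact mk3_23 (Ne.symm hac) (Ne.symm hbc) hab
    · intro i hi
      simp only [hP', if_neg hi]
      split_ifs with h
      · exact mk3_23 (Ne.symm hbc) (Ne.symm hac) (Ne.symm hab)
      · exact mk3_13 hbc (Ne.symm hab) (Ne.symm hac)
  have h3 : (f P').1 c b := (f P').trans' h1 h2
  refine (hI P P' c b ?_).mpr h3
  intro i
  by_cases hi : i ∈ D
  · simp only [hP', if_pos hi]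
    exact iff_of_true (hPD i hi) (mk3_13 (Ne.symm hac) (Ne.symm hbc) hab)
  · simp only [hP', if_neg hi]
    by_cases h : (P i).1 c b
    · rw [if_pos h]
      exact iff_of_true h (mk3_12 (Ne.symm hbc) (Ne.symm hac) (Ne.symm hab))
    · rw [if_neg h]
      refine iff_of_false h ?_
      exact (mk3 b c a hbc (Ne.symm hab) (Ne.symm hac)).asymm'
        (mk3_12 hbc (Ne.symm hab) (Ne.symm hac))

/-- Field expansion: a coalition weakly decisive on one pair is decisive everywhere. -/
lemma weakDec_decisive [Fintype X] (hX : 3 ≤ Fintype.card X)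
    {f : (ι → SLO X) → SLO X} (hP : Pareto f) (hI : IIA f)
    {D : Set ι} {a b : X} (hab : a ≠ b) (hw : WeakDec f D a b) : Decisive f D := by
  obtain ⟨c, hca, hcb⟩ := exists_third hX a b
  -- basic derived decisivenesses
  have Dac : PairDecisive f D a c := expand1 hP hI hab (Ne.symm hca) (Ne.symm hcb) hw
  have Dbc : PairDecisive f D b c :=
    expand2 hP hI (Ne.symm hca) hab hcb (pairDecisive_weakDec Dac)
  have Dba : PairDecisive f D b a :=
    expand1 hP hI (Ne.symm hcb) (Ne.symm hab) hca (pairDecisive_weakDec Dbc)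
  have wba : WeakDec f D b a := pairDecisive_weakDec Dba
  intro x y hxy
  by_cases hxa : x = a
  · subst hxa
    by_cases hyb : y = b
    · subst hyb
      exact expand1 hP hI (Ne.symm hca) hab hcb (pairDecisive_weakDec Dac)
    · exact expand1 hP hI hab hxy (fun h => hyb h.symm) hw
  · by_cases hxb : x = b
    · subst hxb
      by_cases hya : y = a
      · subst hya; exact Dba
      · exact expand1 hP hI (Ne.symm hab) hxy (fun h => hya h.symm) wba
    · by_cases hyb : y = b
      · subst hyb
        exact expand2 hP hI hab (fun h => hxa h.symm) (fun h => hxb h.symm) hw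
      · by_cases hya : y = a
        · subst hya
          exact expand2 hP hI (Ne.symm hab) (fun h => hxb h.symm) (fun h => hxa h.symm) wba
        · have Day : PairDecisive f D a y :=
            expand1 hP hI hab (fun h => hya h.symm) (fun h => hyb h.symm) hw
          exact expand2 hP hI (fun h => hya h.symm) (fun h => hxa h.symm) (Ne.symm hxy)
            (pairDecisive_weakDec Day)

/-- Coalition contraction. -/
lemma contract [Fintype X] [Fintype ι] (hX : 3 ≤ Fintype.card X)
    {f : (ι → SLO X) → SLO X} (hP : Pareto f) (hI : IIA f)
    (D : Finset ι) (hD : Decisive f ↑D) (h2 : 2 ≤ D.card) :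
    ∃ D' : Finset ι, D'.Nonempty ∧ D'.card < D.card ∧ Decisive f ↑D' := by
  classical
  obtain ⟨i0, hi0⟩ : D.Nonempty := Finset.card_pos.mp (by omega)
  obtain ⟨a, b, hab⟩ := Fintype.exists_pair_of_one_lt_card (by omega : 1 < Fintype.card X)
  obtain ⟨c, hca, hcb⟩ := exists_third hX a b
  have hac : a ≠ c := Ne.symm hca
  have hbc : b ≠ c := Ne.symm hcb
  set P : ι → SLO X := fun i =>
    if i = i0 then mk3 a b c hab hac hbc
    else if i ∈ D then mk3 b c a hbc (Ne.symm hab) hca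
    else mk3 c a b hca hcb hab with hPdef
  have hbcsoc : (f P).1 b c := by
    apply hD b c hbc P
    intro i hi
    simp only [Finset.coe_sort_coe, Finset.mem_coe] at hi
    by_cases h : i = i0
    · simp only [hPdef, if_pos h]
      exact mk3_23 hab hac hbc
    · simp only [hPdef, if_neg h, if_pos hi]
      exact mk3_12 hbc (Ne.symm hab) hca
  rcases (f P).trichotomy a c with h | h | h
  · -- {i0} is weakly decisive on (a,c)
    refine ⟨{i0}, Finset.singleton_nonempty _, by rw [Finset.card_singleton]; omega, ?_⟩
    apply weakDec_decisive hX hP hI hac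
    intro Q hQin hQout
    refine (hI Q P a c ?_).mpr h
    intro i
    by_cases hii : i = i0
    · subst hii
      refine iff_of_true (hQin i (by simp)) ?_
      simp only [hPdef, if_pos rfl]
      exact mk3_13 hab hac hbc
    · have hQi : (Q i).1 c a := hQout i (by simp [hii])
      refine iff_of_false ((Q i).asymm' hQi) ?_
      simp only [hPdef, if_neg hii]
      by_cases hiD : i ∈ D
      · rw [if_pos hiD]
        exact (mk3 b c a hbc (Ne.symm hab) hca).asymm' (mk3_23 hbc (Ne.symm hab) hca)
      · rw [if_neg hiD]
        exact (mk3 c a b hca hcb hab).asymm' (mk3_12 hca hcb hab)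
  · exact absurd h hac
  · -- D \ {i0} is weakly decisive on (b,a)
    have hbasoc : (f P).1 b a := (f P).trans' hbcsoc h
    refine ⟨D.erase i0, ?_, ?_, ?_⟩
    · rw [← Finset.card_pos, Finset.card_erase_of_mem hi0]; omega
    · rw [Finset.card_erase_of_mem hi0]; omega
    · apply weakDec_decisive hX hP hI (Ne.symm hab)
      intro Q hQin hQout
      refine (hI Q P b a ?_).mpr hbasoc
      intro i
      by_cases hii : i ∈ D.erase i0
      · refine iff_of_true (hQin i hii) ?_
        rw [Finset.mem_erase] at hii
        simp only [hPdef, if_neg hii.1, if_pos hii.2]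
        exact mk3_13 hbc (Ne.symm hab) hca
      · have hQi : (Q i).1 a b := hQout i hii
        refine iff_of_false ((Q i).asymm' hQi) ?_
        simp only [hPdef]
        by_cases h1 : i = i0
        · rw [if_pos h1]
          exact (mk3 a b c hab hac hbc).asymm' (mk3_12 hab hac hbc)
        · have h2' : i ∉ D := by
            intro hmem
            exact hii (Finset.mem_erase.mpr ⟨h1, hmem⟩)
          rw [if_neg h1, if_neg h2']
          exact (mk3 c a b hca hcb hab).asymm' (mk3_23 hca hcb hab)

end ArrowAux

theorem arrow_impossibility {X ι : Type*} [Fintype X] [Fintype ι]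
    (hX : 3 ≤ Fintype.card X) (hι : 2 ≤ Fintype.card ι)
    (f : (ι → SLO X) → SLO X) (hP : Pareto f) (hI : IIA f) :
    ∃ d : ι, IsDictator f d := by
  classical
  have huniv : Decisive f ↑(Finset.univ : Finset ι) := by
    intro x y hxy P h
    exact hP P x y (fun i => h i (by simp))
  have key : ∀ n : ℕ, ∀ D : Finset ι, D.card = n → D.Nonempty → Decisive f ↑D →
      ∃ d : ι, IsDictator f d := by
    intro n
    induction n using Nat.strong_induction_on with
    | _ n ih =>
      intro D hcard hne hdec
      rcases eq_or_lt_of_le (Nat.succ_le_of_lt (Finset.Nonempty.card_pos hne)) with h1 | h1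
      · obtain ⟨d, hd⟩ := Finset.card_eq_one.mp h1.symm
        refine ⟨d, ?_⟩
        intro P a b hab
        have hne' : a ≠ b := by
          rintro rfl
          exact (P d).irrefl' a hab
        apply hdec a b hne' P
        intro i hi
        have : i = d := by
          subst hd
          simpa using hi
        subst this
        exact hab
      · obtain ⟨D', hD'ne, hD'lt, hD'dec⟩ := contract hX hP hI D hdec h1
        exact ih D'.card (by omega) D' rfl hD'ne hD'dec
  apply key (Finset.univ : Finset ι).card Finset.univ rfl
  · rw [← Finset.card_pos, Finset.card_univ]; omega
  · exact huniv
end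

section
/- Field-Expansion Lemma: For a social welfare function satisfying Pareto and IIA on at least 3 alternatives, if a coalition D ⊆ N is (a,b)-decisive for some pair of distinct alternatives a, b, then D is decisive for every pair of alternatives. -/
noncomputable def mkSLO {X : Type*} [Fintype X] (g : X → ℕ) : SLO X :=
  ⟨fun x y => g x < g y ∨ (g x = g y ∧ (Fintype.equivFin X) x < (Fintype.equivFin X) y), by
    letI r : X → X → Prop := fun x y =>
      g x < g y ∨ (g x = g y ∧ (Fintype.equivFin X) x < (Fintype.equivFin X) y)
    have htri : IsTrichotomous X r := by
      suffices key : ∀ x y, r x y ∨ x = y ∨ r y x from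
        ⟨fun x y h1 h2 => ((key x y).resolve_left h1).resolve_right h2⟩
      intro x y
      rcases lt_trichotomy (g x) (g y) with h | h | h
      · exact Or.inl (Or.inl h)
      · rcases lt_trichotomy ((Fintype.equivFin X) x) ((Fintype.equivFin X) y) with h2 | h2 | h2
        · exact Or.inl (Or.inr ⟨h, h2⟩)
        · exact Or.inr (Or.inl ((Fintype.equivFin X).injective h2))
        · exact Or.inr (Or.inr (Or.inr ⟨h.symm, h2⟩))
      · exact Or.inr (Or.inr (Or.inl h))
    have hirr : IsIrrefl X r := by
      constructor
      intro x h
      rcases h with h | ⟨_, h⟩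
      · exact lt_irrefl _ h
      · exact lt_irrefl _ h
    have htrans : IsTrans X r := by
      constructor
      intro x y z h1 h2
      rcases h1 with h1 | ⟨e1, l1⟩ <;> rcases h2 with h2 | ⟨e2, l2⟩
      · exact Or.inl (h1.trans h2)
      · exact Or.inl (by omega)
      · exact Or.inl (by omega)
      · exact Or.inr ⟨e1.trans e2, l1.trans l2⟩
    letI : IsStrictOrder X r := { toIrrefl := hirr, toIsTrans := htrans }
    exact { toTrichotomous := htri, toIsStrictOrder := inferInstance }⟩

lemma mkSLO_lt {X : Type*} [Fintype X] {g : X → ℕ} {x y : X} (h : g x < g y) :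
    (mkSLO g).1 x y := Or.inl h

lemma mkSLO_le {X : Type*} [Fintype X] {g : X → ℕ} {x y : X} (h : (mkSLO g).1 x y) :
    g x ≤ g y := by
  rcases h with h | ⟨h, _⟩
  · exact h.le
  · exact h.le

lemma mkSLO_not {X : Type*} [Fintype X] {g : X → ℕ} {x y : X} (h : g y < g x) :
    ¬ (mkSLO g).1 x y := fun hc => absurd (mkSLO_le hc) (by omega)

lemma slo_trans {X : Type*} (r : SLO X) {x y z : X} (h1 : r.1 x y) (h2 : r.1 y z) :
    r.1 x z := r.2.trans x y z h1 h2

lemma expand {X ι : Type*} [Fintype X] [Finite ι]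
    (f : (ι → SLO X) → SLO X) (hP : Pareto f) (hI : IIA f)
    (D : Set ι) (a b c : X) (hab : a ≠ b) (hac : a ≠ c) (hbc : b ≠ c)
    (hD : PairDecisive f D a b) :
    PairDecisive f D a c ∧ PairDecisive f D c b := by
  classical
  constructor
  · -- (a,c)-decisive
    intro P hPac
    set g1 : X → ℕ := fun z => if z = a then 0 else if z = b then 1 else if z = c then 2 else 3
      with hg1
    set g2 : ι → X → ℕ := fun i z => if z = b then 0 else
        if z = a then (if (P i).1 a c then 1 else 2)
        else if z = c then (if (P i).1 a c then 2 else 1) else 3 with hg2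
    set P' : ι → SLO X := fun i => if i ∈ D then mkSLO g1 else mkSLO (g2 i) with hP'
    have hg1a : g1 a = 0 := by simp [hg1]
    have hg1b : g1 b = 1 := by simp [hg1, Ne.symm hab]
    have hg1c : g1 c = 2 := by simp [hg1, Ne.symm hac, Ne.symm hbc]
    have hg2b : ∀ i, g2 i b = 0 := fun i => by simp [hg2]
    have hg2a : ∀ i, g2 i a = if (P i).1 a c then 1 else 2 := fun i => by simp [hg2, hab]
    have hg2c : ∀ i, g2 i c = if (P i).1 a c then 2 else 1 := fun i => by
      simp [hg2, Ne.symm hbc, Ne.symm hac]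
    have hfab : (f P').1 a b := by
      apply hD
      intro i hi
      simp only [hP', if_pos hi]
      exact mkSLO_lt (by rw [hg1a, hg1b]; omega)
    have hfbc : (f P').1 b c := by
      apply hP
      intro i
      by_cases hi : i ∈ D
      · simp only [hP', if_pos hi]
        exact mkSLO_lt (by rw [hg1b, hg1c]; omega)
      · simp only [hP', if_neg hi]
        refine mkSLO_lt ?_
        rw [hg2b, hg2c]
        split <;> omega
    have hfac : (f P').1 a c := slo_trans (f P') hfab hfbc
    have hiff : ∀ i, (P' i).1 a c ↔ (P i).1 a c := by
      intro i
      by_cases hi : i ∈ D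
      · simp only [hP', if_pos hi]
        exact iff_of_true (mkSLO_lt (by rw [hg1a, hg1c]; omega)) (hPac i hi)
      · simp only [hP', if_neg hi]
        by_cases h : (P i).1 a c
        · exact iff_of_true (mkSLO_lt (by rw [hg2a, hg2c, if_pos h, if_pos h]; omega)) h
        · exact iff_of_false (mkSLO_not (by rw [hg2a, hg2c, if_neg h, if_neg h]; omega)) h
    exact (hI P' P a c hiff).mp hfac
  · -- (c,b)-decisive
    intro P hPcb
    set g1 : X → ℕ := fun z => if z = c then 0 else if z = a then 1 else if z = b then 2 else 3
      with hg1
    set g2 : ι → X → ℕ := fun i z => if z = a then 2 else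
        if z = c then (if (P i).1 c b then 0 else 1)
        else if z = b then (if (P i).1 c b then 1 else 0) else 3 with hg2
    set P' : ι → SLO X := fun i => if i ∈ D then mkSLO g1 else mkSLO (g2 i) with hP'
    have hg1c : g1 c = 0 := by simp [hg1]
    have hg1a : g1 a = 1 := by simp [hg1, hac]
    have hg1b : g1 b = 2 := by simp [hg1, hbc, Ne.symm hab]
    have hg2a : ∀ i, g2 i a = 2 := fun i => by simp [hg2]
    have hg2c : ∀ i, g2 i c = if (P i).1 c b then 0 else 1 := fun i => by
      simp [hg2, Ne.symm hac]
    have hg2b : ∀ i, g2 i b = if (P i).1 c b then 1 else 0 := fun i => by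
      simp [hg2, Ne.symm hab, hbc]
    have hfca : (f P').1 c a := by
      apply hP
      intro i
      by_cases hi : i ∈ D
      · simp only [hP', if_pos hi]
        exact mkSLO_lt (by rw [hg1c, hg1a]; omega)
      · simp only [hP', if_neg hi]
        refine mkSLO_lt ?_
        rw [hg2c, hg2a]
        split <;> omega
    have hfab : (f P').1 a b := by
      apply hD
      intro i hi
      simp only [hP', if_pos hi]
      exact mkSLO_lt (by rw [hg1a, hg1b]; omega)
    have hfcb : (f P').1 c b := slo_trans (f P') hfca hfab
    have hiff : ∀ i, (P' i).1 c b ↔ (P i).1 c b := by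
      intro i
      by_cases hi : i ∈ D
      · simp only [hP', if_pos hi]
        exact iff_of_true (mkSLO_lt (by rw [hg1c, hg1b]; omega)) (hPcb i hi)
      · simp only [hP', if_neg hi]
        by_cases h : (P i).1 c b
        · exact iff_of_true (mkSLO_lt (by rw [hg2c, hg2b, if_pos h, if_pos h]; omega)) h
        · exact iff_of_false (mkSLO_not (by rw [hg2c, hg2b, if_neg h, if_neg h]; omega)) h
    exact (hI P' P c b hiff).mp hfcb

theorem field_expansion {X ι : Type*} [Fintype X] [Finite ι]
    (hX : 3 ≤ Fintype.card X)
    (f : (ι → SLO X) → SLO X) (hP : Pareto f) (hI : IIA f)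
    (D : Set ι) (a b : X) (hab : a ≠ b) (hD : PairDecisive f D a b) :
    Decisive f D := by
  classical
  have third : ∀ x y : X, ∃ c : X, c ≠ x ∧ c ≠ y := by
    intro x y
    by_contra h
    push_neg at h
    have hsub : (Finset.univ : Finset X) ⊆ {x, y} := by
      intro c _
      rcases Classical.em (c = x) with h1 | h1
      · simp [h1]
      · simp [h c h1]
    have := Finset.card_le_card hsub
    have h2 : ({x, y} : Finset X).card ≤ 2 := by
      apply le_trans (Finset.card_insert_le _ _)
      simp
    simp [Finset.card_univ] at this
    omega
  have L1 : ∀ y, y ≠ a → PairDecisive f D a y := by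
    intro y hy
    by_cases hyb : y = b
    · exact hyb ▸ hD
    · exact (expand f hP hI D a b y hab (Ne.symm hy) (fun h => hyb h.symm) hD).1
  have L2 : ∀ x, x ≠ a → PairDecisive f D x a := by
    intro x hx
    obtain ⟨w, hwx, hwa⟩ := third x a
    have h1 := (expand f hP hI D a w x (Ne.symm hwa) (Ne.symm hx) hwx (L1 w hwa)).2
    exact (expand f hP hI D x w a (fun h => hwx h.symm) hx hwa h1).1
  intro x y hxy
  by_cases hx : x = a
  · exact hx ▸ L1 y (fun h => hxy (by rw [hx, h]))
  · by_cases hy : y = a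
    · exact hy ▸ L2 x hx
    · exact (expand f hP hI D x a y hx hxy (Ne.symm hy) (L2 x hx)).1
end

section
/- Two-dimensional Sperner lemma: For any triangulation of a triangle with vertices v_1, v_2, v_3 and any Sperner labelling of the triangulation's vertices (vertex v_k receives label k, vertices on the edge between v_j and v_k receive label j or k, interior vertices receive any label in {1,2,3}), there exists a triangle of the triangulation whose three vertices carry all three labels 1, 2, 3. -/
open Finset

abbrev V3 := Fin 3 → ℝ

/-- Uniqueness of affine-combination coefficients over an affinely independent finset. -/
lemma unique_coeffs {s : Finset V3}
    (hs : AffineIndependent ℝ (Subtype.val : {x // x ∈ s} → V3))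
    {w1 w2 : V3 → ℝ} (h1 : ∑ v ∈ s, w1 v = 1) (h2 : ∑ v ∈ s, w2 v = 1)
    (heq : ∑ v ∈ s, w1 v • v = ∑ v ∈ s, w2 v • v) : ∀ v ∈ s, w1 v = w2 v := by
  have key := (affineIndependent_iff_eq_of_fintype_affineCombination_eq ℝ
      (Subtype.val : {x // x ∈ s} → V3)).1 hs (fun i => w1 i.val) (fun i => w2 i.val) ?_ ?_ ?_
  · intro v hv
    have := congrFun key ⟨v, hv⟩
    simpa using this
  · show ∑ i : {x // x ∈ s}, w1 i.val = 1
    rw [Finset.sum_coe_sort s w1]; exact h1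
  · show ∑ i : {x // x ∈ s}, w2 i.val = 1
    rw [Finset.sum_coe_sort s w2]; exact h2
  · rw [Finset.affineCombination_eq_linear_combination _ _ _
        (by show ∑ i : {x // x ∈ s}, w1 i.val = 1; rw [Finset.sum_coe_sort s w1]; exact h1),
      Finset.affineCombination_eq_linear_combination _ _ _
        (by show ∑ i : {x // x ∈ s}, w2 i.val = 1; rw [Finset.sum_coe_sort s w2]; exact h2)]
    show ∑ i : {x // x ∈ s}, w1 i.val • i.val = ∑ i : {x // x ∈ s}, w2 i.val • i.val
    rw [Finset.sum_coe_sort s (fun v => w1 v • v), Finset.sum_coe_sort s (fun v => w2 v • v)]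
    exact heq

noncomputable def sumF : V3 →ₗ[ℝ] ℝ := ∑ i, LinearMap.proj i

lemma sumF_apply (x : V3) : sumF x = ∑ i, x i := by
  simp [sumF]

/-- Every point of the hyperplane `∑ x i = 1` is an affine combination of the vertices of
an affinely independent 3-element finset inside the hyperplane. -/
lemma exists_coeffs {s : Finset V3}
    (hs : AffineIndependent ℝ (Subtype.val : {x // x ∈ s} → V3))
    (hcard : s.card = 3) (hsum : ∀ v ∈ s, ∑ i, v i = 1)
    {x : V3} (hx : ∑ i, x i = 1) :
    ∃ α : V3 → ℝ, ∑ v ∈ s, α v = 1 ∧ ∑ v ∈ s, α v • v = x := by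
  classical
  have hfr : Module.finrank ℝ (LinearMap.ker sumF) = 2 := by
    have h1 := LinearMap.finrank_range_add_finrank_ker sumF
    have h2 : LinearMap.range sumF = ⊤ := by
      rw [LinearMap.range_eq_top]
      intro c
      exact ⟨fun _ => c / 3, by simp [sumF_apply]; ring⟩
    rw [h2] at h1
    have h3 : Module.finrank ℝ V3 = 3 := by
      simpa using Module.finrank_fintype_fun_eq_card (R := ℝ) (η := Fin 3)
    simp [finrank_top] at h1
    omega
  have hvs : vectorSpan ℝ (s : Set V3) = LinearMap.ker sumF := by
    have hle : vectorSpan ℝ (s : Set V3) ≤ LinearMap.ker sumF := by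
      rw [vectorSpan_def, Submodule.span_le]
      rintro y ⟨a, ha, b, hb, rfl⟩
      simp only [SetLike.mem_coe, LinearMap.mem_ker, vsub_eq_sub, map_sub]
      rw [sumF_apply, sumF_apply, hsum a ha, hsum b hb, sub_self]
    have hfr2 : Module.finrank ℝ (vectorSpan ℝ (s : Set V3)) = 2 := by
      have : Fintype.card {x // x ∈ s} = 2 + 1 := by simp [hcard]
      have h4 := hs.finrank_vectorSpan this
      rw [show Set.range (Subtype.val : {x // x ∈ s} → V3) = (s : Set V3) from Subtype.range_coe] at h4
      exact h4
    exact Submodule.eq_of_le_of_finrank_le hle (by rw [hfr, hfr2])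
  obtain ⟨u, hu⟩ : s.Nonempty := by rw [← Finset.card_pos, hcard]; norm_num
  have hxs : x ∈ affineSpan ℝ (s : Set V3) := by
    have hdir : x - u ∈ (affineSpan ℝ (s : Set V3)).direction := by
      rw [direction_affineSpan, hvs]
      simp only [LinearMap.mem_ker, map_sub, sumF_apply]
      rw [hx, hsum u hu, sub_self]
    have := AffineSubspace.vadd_mem_of_mem_direction hdir (mem_affineSpan ℝ (Finset.mem_coe.2 hu))
    simpa using this
  rw [show (s : Set V3) = Set.range (Subtype.val : {x // x ∈ s} → V3) by
    exact (Subtype.range_coe).symm] at hxs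
  obtain ⟨w, hw1, hw2⟩ := eq_affineCombination_of_mem_affineSpan_of_fintype hxs
  rw [Finset.affineCombination_eq_linear_combination _ _ _ hw1] at hw2
  refine ⟨fun v => if h : v ∈ s then w ⟨v, h⟩ else 0, ?_, ?_⟩
  · rw [← Finset.sum_coe_sort s]
    rw [← hw1]
    apply Finset.sum_congr rfl
    intro i _
    simp
  · rw [← Finset.sum_coe_sort s (fun v => (if h : v ∈ s then w ⟨v, h⟩ else 0) • v)]
    rw [hw2]
    apply Finset.sum_congr rfl
    intro i _
    simp

section helpers
variable {M : Type*} [AddCommMonoid M]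

lemma sum3 {u v w : V3} (huv : u ≠ v) (huw : u ≠ w) (hvw : v ≠ w) (f : V3 → M) :
    ∑ x ∈ ({u, v, w} : Finset V3), f x = f u + f v + f w := by
  rw [Finset.sum_insert (by simp [huv, huw]), Finset.sum_insert (by simp [hvw]),
    Finset.sum_singleton, add_assoc]

lemma sum2 {u v : V3} (huv : u ≠ v) (f : V3 → M) :
    ∑ x ∈ ({u, v} : Finset V3), f x = f u + f v := by
  rw [Finset.sum_insert (by simp [huv]), Finset.sum_singleton]

end helpers

/-- A triangulation of the standard `n`-simplex `stdSimplex ℝ (Fin (n+1))`: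
a finite family of geometric `n`-cells (given by their vertex sets), each affinely
independent with `n+1` vertices, covering the simplex and meeting face-to-face. -/
structure Triangulation (n : ℕ) where
  cells : Finset (Finset (Fin (n + 1) → ℝ))
  card_cells : ∀ s ∈ cells, s.card = n + 1
  indep : ∀ s ∈ cells,
    AffineIndependent ℝ (Subtype.val : {x // x ∈ s} → (Fin (n + 1) → ℝ))
  covers : (⋃ s ∈ cells, convexHull ℝ (s : Set (Fin (n + 1) → ℝ)))
      = stdSimplex ℝ (Fin (n + 1))
  face_to_face : ∀ s ∈ cells, ∀ t ∈ cells,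
    convexHull ℝ (s : Set (Fin (n + 1) → ℝ)) ∩ convexHull ℝ (t : Set (Fin (n + 1) → ℝ))
      = convexHull ℝ ((s ∩ t : Finset (Fin (n + 1) → ℝ)) : Set (Fin (n + 1) → ℝ))

/-- The vertex set of a triangulation. -/
noncomputable def Triangulation.verts {n : ℕ} (T : Triangulation n) : Finset (Fin (n + 1) → ℝ) :=
  T.cells.sup id

/-- A Sperner labelling: every vertex of the triangulation receives a label whose
barycentric coordinate (with respect to the standard simplex) at that vertex is positive,
i.e. a vertex in the interior of the face spanned by `{v_i : i ∈ I}` gets a label in `I`. -/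
def IsSpernerLabelling {n : ℕ} (T : Triangulation n)
    (L : (Fin (n + 1) → ℝ) → Fin (n + 1)) : Prop :=
  ∀ v ∈ T.verts, 0 < v (L v)

namespace Sperner

variable {T : Triangulation 2}

lemma subset_verts {s : Finset V3} (hs : s ∈ T.cells) : s ⊆ T.verts :=
  Finset.le_sup (f := id) hs

lemma vert_mem_simplex {s : Finset V3} (hs : s ∈ T.cells) {v : V3} (hv : v ∈ s) :
    v ∈ stdSimplex ℝ (Fin 3) := by
  rw [← T.covers]
  exact Set.mem_biUnion hs (subset_convexHull ℝ _ (Finset.mem_coe.2 hv))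

lemma vert_nonneg {s : Finset V3} (hs : s ∈ T.cells) {v : V3} (hv : v ∈ s) (i : Fin 3) :
    0 ≤ v i := (vert_mem_simplex hs hv).1 i

lemma vert_sum {s : Finset V3} (hs : s ∈ T.cells) {v : V3} (hv : v ∈ s) :
    ∑ i, v i = 1 := (vert_mem_simplex hs hv).2

/-- Given a cell `s = {u,v,w}` and a distinct cell `t` containing `u, v` and a point `z`
whose barycentric `w`-coefficient w.r.t. `s` is positive, derive a contradiction. -/
lemma pair_lemma {s t : Finset V3} (hs : s ∈ T.cells) (ht : t ∈ T.cells)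
    (hst : s ≠ t) {u v w : V3} (hu : u ∈ s) (hv : v ∈ s) (hw : w ∈ s)
    (huv : u ≠ v) (huw : u ≠ w) (hvw : v ≠ w)
    (hut : u ∈ t) (hvt : v ∈ t) {z : V3} (hz : z ∈ t) {α β γ : ℝ} (hγ : 0 < γ)
    (hsum : α + β + γ = 1) (hzc : z = α • u + β • v + γ • w) : False := by
  classical
  have hseq : s = ({u, v, w} : Finset V3) := by
    refine (Finset.eq_of_subset_of_card_le ?_ ?_).symm
    · intro x hx
      simp only [Finset.mem_insert, Finset.mem_singleton] at hx
      rcases hx with rfl | rfl | rfl <;> assumption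
    · rw [T.card_cells s hs, Finset.card_insert_of_notMem (by simp [huv, huw]),
        Finset.card_insert_of_notMem (by simp [hvw]), Finset.card_singleton]
  have hwt : w ∉ t := by
    intro hwt
    apply hst
    apply Finset.eq_of_subset_of_card_le
    · rw [hseq]
      intro x hx
      simp only [Finset.mem_insert, Finset.mem_singleton] at hx
      rcases hx with rfl | rfl | rfl <;> assumption
    · rw [T.card_cells s hs, T.card_cells t ht]
  set K : ℝ := 1 + |α| + |β| with hK
  have hK1 : (1 : ℝ) ≤ K := by rw [hK]; linarith [abs_nonneg α, abs_nonneg β]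
  set ε : ℝ := 1 / (4 * K) with hε
  have hε0 : 0 < ε := by positivity
  have hε14 : ε ≤ 1 / 4 := by
    rw [hε]
    rw [div_le_div_iff₀ (by positivity) (by norm_num)]
    nlinarith
  have hεα : ε * |α| ≤ 1 / 4 := by
    rw [hε]
    rw [div_mul_eq_mul_div, div_le_div_iff₀ (by positivity) (by norm_num)]
    nlinarith [abs_nonneg α, abs_nonneg β]
  have hεβ : ε * |β| ≤ 1 / 4 := by
    rw [hε]
    rw [div_mul_eq_mul_div, div_le_div_iff₀ (by positivity) (by norm_num)]
    nlinarith [abs_nonneg α, abs_nonneg β]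
  set cu : ℝ := (1 - ε) / 2 + ε * α with hcu
  set cv : ℝ := (1 - ε) / 2 + ε * β with hcv
  have hcu0 : 0 < cu := by
    have h1 : ε * -|α| ≤ ε * α := mul_le_mul_of_nonneg_left (neg_abs_le α) hε0.le
    have h2 : ε * -|α| = -(ε * |α|) := by ring
    rw [hcu]; linarith [hεα, hε14]
  have hcv0 : 0 < cv := by
    have h1 : ε * -|β| ≤ ε * β := mul_le_mul_of_nonneg_left (neg_abs_le β) hε0.le
    have h2 : ε * -|β| = -(ε * |β|) := by ring
    rw [hcv]; linarith [hεβ, hε14]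
  have hsum1 : cu + cv + ε * γ = 1 := by
    rw [hcu, hcv]; nlinarith [hsum, hε0]
  set p : V3 := cu • u + cv • v + (ε * γ) • w with hp
  set f1 : V3 → ℝ := fun x => if x = u then cu else if x = v then cv else ε * γ with hf1
  have f1u : f1 u = cu := by simp [hf1]
  have f1v : f1 v = cv := by simp [hf1, Ne.symm huv]
  have f1w : f1 w = ε * γ := by simp [hf1, Ne.symm huw, Ne.symm hvw]
  -- p ∈ convexHull s
  have hps : p ∈ convexHull ℝ (s : Set V3) := by
    rw [Finset.mem_convexHull']
    refine ⟨f1, ?_, ?_, ?_⟩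
    · intro y hy
      rw [hseq] at hy
      simp only [Finset.mem_insert, Finset.mem_singleton] at hy
      rcases hy with rfl | rfl | rfl
      · rw [f1u]; exact hcu0.le
      · rw [f1v]; exact hcv0.le
      · rw [f1w]; positivity
    · rw [hseq, sum3 huv huw hvw f1, f1u, f1v, f1w]; exact hsum1
    · rw [hseq, sum3 huv huw hvw (f := fun x => f1 x • x), f1u, f1v, f1w]
  -- p ∈ convexHull t
  have hpt : p ∈ convexHull ℝ (t : Set V3) := by
    have hm : (1/2 : ℝ) • u + (1/2 : ℝ) • v ∈ convexHull ℝ (t : Set V3) := by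
      refine (convex_convexHull ℝ _) (subset_convexHull ℝ _ hut) (subset_convexHull ℝ _ hvt)
        (by norm_num) (by norm_num) (by norm_num)
    have hzc' : z ∈ convexHull ℝ (t : Set V3) := subset_convexHull ℝ _ hz
    have hcomb := (convex_convexHull ℝ (t : Set V3)) hm hzc'
      (by linarith : (0:ℝ) ≤ 1 - ε) hε0.le (by ring)
    have heqp : (1 - ε) • ((1/2 : ℝ) • u + (1/2 : ℝ) • v) + ε • z = p := by
      rw [hzc, hp, hcu, hcv]
      module
    rwa [heqp] at hcomb
  -- hence p ∈ convexHull (s ∩ t) = convexHull {u, v}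
  have hint : s ∩ t = ({u, v} : Finset V3) := by
    apply Finset.Subset.antisymm
    · intro x hx
      rw [Finset.mem_inter, hseq] at hx
      obtain ⟨hx1, hx2⟩ := hx
      simp only [Finset.mem_insert, Finset.mem_singleton] at hx1 ⊢
      rcases hx1 with rfl | rfl | rfl
      · left; rfl
      · right; rfl
      · exact absurd hx2 hwt
    · intro x hx
      simp only [Finset.mem_insert, Finset.mem_singleton] at hx
      rcases hx with rfl | rfl <;> simp [Finset.mem_inter, *]
  have hpuv : p ∈ convexHull ℝ (({u, v} : Finset V3) : Set V3) := by
    rw [← hint, ← T.face_to_face s hs t ht]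
    exact ⟨hps, hpt⟩
  -- contradiction via uniqueness of barycentric coordinates
  rw [Finset.mem_convexHull'] at hpuv
  obtain ⟨g, hg0, hg1, hg2⟩ := hpuv
  rw [sum2 huv] at hg1
  rw [sum2 huv (f := fun y => g y • y)] at hg2
  set f2 : V3 → ℝ := fun x => if x = w then 0 else g x with hf2
  have f2u : f2 u = g u := by simp [hf2, huw]
  have f2v : f2 v = g v := by simp [hf2, hvw]
  have f2w : f2 w = 0 := by simp [hf2]
  have key := unique_coeffs (T.indep s hs) (w1 := f1) (w2 := f2) ?_ ?_ ?_ w hw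
  · rw [f1w, f2w] at key
    nlinarith [mul_pos hε0 hγ]
  · rw [hseq, sum3 huv huw hvw f1, f1u, f1v, f1w]; exact hsum1
  · rw [hseq, sum3 huv huw hvw f2, f2u, f2v, f2w]; linarith [hg1]
  · rw [hseq, sum3 huv huw hvw (f := fun x => f1 x • x),
      sum3 huv huw hvw (f := fun x => f2 x • x), f1u, f1v, f1w, f2u, f2v, f2w]
    rw [hg2, hp]
    module

/-- extract the third vertex of a cell containing two given distinct vertices -/
lemma exists_apex {s : Finset V3} (hs : s ∈ T.cells) {u v : V3} (hu : u ∈ s) (hv : v ∈ s)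
    (huv : u ≠ v) : ∃ w, w ∈ s ∧ w ≠ u ∧ w ≠ v ∧ s = {u, v, w} := by
  classical
  have hcard := T.card_cells s hs
  have hss : ({u, v} : Finset V3) ⊆ s := by
    intro x hx
    simp only [Finset.mem_insert, Finset.mem_singleton] at hx
    rcases hx with rfl | rfl <;> assumption
  have hc2 : ({u, v} : Finset V3).card = 2 := by
    rw [Finset.card_insert_of_notMem (by simp [huv]), Finset.card_singleton]
  have hd : (s \ {u, v}).card = 1 := by
    rw [Finset.card_sdiff_of_subset hss, hcard, hc2]
  obtain ⟨w, hw⟩ := Finset.card_eq_one.1 hd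
  have hwmem : w ∈ s \ ({u, v} : Finset V3) := by rw [hw]; exact Finset.mem_singleton_self w
  rw [Finset.mem_sdiff, Finset.mem_insert, Finset.mem_singleton] at hwmem
  push_neg at hwmem
  obtain ⟨hws, hwu, hwv⟩ := hwmem
  refine ⟨w, hws, hwu, hwv, (Finset.eq_of_subset_of_card_le ?_ ?_).symm⟩
  · intro x hx
    simp only [Finset.mem_insert, Finset.mem_singleton] at hx
    rcases hx with rfl | rfl | rfl <;> assumption
  · rw [hcard, Finset.card_insert_of_notMem (by simp [huv, Ne.symm hwu]),
      Finset.card_insert_of_notMem (by simp [Ne.symm hwv]), Finset.card_singleton]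

/-- uniqueness of coefficients for explicit 3-element cells -/
lemma unique3 {s : Finset V3} (hs : s ∈ T.cells) {u v w : V3} (hseq : s = {u, v, w})
    (huv : u ≠ v) (huw : u ≠ w) (hvw : v ≠ w) {a b c a' b' c' : ℝ}
    (h1 : a + b + c = 1) (h2 : a' + b' + c' = 1)
    (heq : a • u + b • v + c • w = a' • u + b' • v + c' • w) :
    a = a' ∧ b = b' ∧ c = c' := by
  classical
  set f1 : V3 → ℝ := fun x => if x = u then a else if x = v then b else c with hf1
  set f2 : V3 → ℝ := fun x => if x = u then a' else if x = v then b' else c' with hf2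
  have e1u : f1 u = a := by simp [hf1]
  have e1v : f1 v = b := by simp [hf1, Ne.symm huv]
  have e1w : f1 w = c := by simp [hf1, Ne.symm huw, Ne.symm hvw]
  have e2u : f2 u = a' := by simp [hf2]
  have e2v : f2 v = b' := by simp [hf2, Ne.symm huv]
  have e2w : f2 w = c' := by simp [hf2, Ne.symm huw, Ne.symm hvw]
  have key := unique_coeffs (T.indep s hs) (w1 := f1) (w2 := f2) ?_ ?_ ?_
  · refine ⟨?_, ?_, ?_⟩
    · have := key u (by rw [hseq]; simp)
      rwa [e1u, e2u] at this
    · have := key v (by rw [hseq]; simp)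
      rwa [e1v, e2v] at this
    · have := key w (by rw [hseq]; simp)
      rwa [e1w, e2w] at this
  · rw [hseq, sum3 huv huw hvw f1, e1u, e1v, e1w]; exact h1
  · rw [hseq, sum3 huv huw hvw f2, e2u, e2v, e2w]; exact h2
  · rw [hseq, sum3 huv huw hvw (f := fun x => f1 x • x),
      sum3 huv huw hvw (f := fun x => f2 x • x), e1u, e1v, e1w, e2u, e2v, e2w]
    exact heq

/-- expansion of a hyperplane point in the barycentric coordinates of a cell -/
lemma expand3 {s : Finset V3} (hs : s ∈ T.cells) {u v w : V3} (hseq : s = {u, v, w})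
    (huv : u ≠ v) (huw : u ≠ w) (hvw : v ≠ w) {x : V3} (hx : ∑ i, x i = 1) :
    ∃ a b c : ℝ, a + b + c = 1 ∧ x = a • u + b • v + c • w := by
  obtain ⟨α, hα1, hα2⟩ := exists_coeffs (T.indep s hs) (T.card_cells s hs)
    (fun y hy => vert_sum hs hy) hx
  rw [hseq, sum3 huv huw hvw α] at hα1
  rw [hseq, sum3 huv huw hvw (f := fun y => α y • y)] at hα2
  exact ⟨α u, α v, α w, hα1, hα2.symm⟩

/-- membership in the convex hull of an explicit 3-element cell, as coefficients -/
lemma mem_hull3 {s : Finset V3} {u v w : V3} (hseq : s = {u, v, w})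
    (huv : u ≠ v) (huw : u ≠ w) (hvw : v ≠ w) {x : V3}
    (hx : x ∈ convexHull ℝ (s : Set V3)) :
    ∃ a b c : ℝ, 0 ≤ a ∧ 0 ≤ b ∧ 0 ≤ c ∧ a + b + c = 1 ∧ x = a • u + b • v + c • w := by
  rw [Finset.mem_convexHull'] at hx
  obtain ⟨g, hg0, hg1, hg2⟩ := hx
  rw [hseq, sum3 huv huw hvw g] at hg1
  rw [hseq, sum3 huv huw hvw (f := fun y => g y • y)] at hg2
  exact ⟨g u, g v, g w, hg0 u (by rw [hseq]; simp), hg0 v (by rw [hseq]; simp),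
    hg0 w (by rw [hseq]; simp), hg1, hg2.symm⟩

/-- a cell cannot lie entirely in the bottom edge -/
lemma not_all_bottom {s : Finset V3} (hs : s ∈ T.cells) (h : ∀ y ∈ s, y 2 = 0) : False := by
  classical
  obtain ⟨a, b, c, hab, hac, hbc, hseq⟩ := Finset.card_eq_three.1 (T.card_cells s hs)
  have hseq' : s = {a, b, c} := hseq
  have ha : a ∈ s := by rw [hseq']; simp
  have hb : b ∈ s := by rw [hseq']; simp
  have hc : c ∈ s := by rw [hseq']; simp
  have hsum : ∀ y ∈ s, y 0 + y 1 = 1 := by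
    intro y hy
    have := vert_sum hs hy
    rw [Fin.sum_univ_three, h y hy, add_zero] at this
    exact this
  have hab1 : a 1 ≠ b 1 := by
    intro hcontra
    apply hab
    funext i
    fin_cases i
    · show a 0 = b 0
      have := hsum a ha; have := hsum b hb; linarith
    · exact hcontra
    · show a 2 = b 2
      rw [h a ha, h b hb]
  set lam : ℝ := (c 1 - b 1) / (a 1 - b 1) with hlam
  have hane : a 1 - b 1 ≠ 0 := sub_ne_zero.2 hab1
  have hcc : c = lam • a + (1 - lam) • b := by
    funext i
    have h1 : lam * a 1 + (1 - lam) * b 1 = c 1 := by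
      have : lam * (a 1 - b 1) = c 1 - b 1 := by rw [hlam]; exact div_mul_cancel₀ _ hane
      linarith
    fin_cases i
    · have ha0 := hsum a ha; have hb0 := hsum b hb; have hc0 := hsum c hc
      show c 0 = lam * a 0 + (1 - lam) * b 0
      have : lam * a 0 + (1 - lam) * b 0 = lam * (1 - a 1) + (1 - lam) * (1 - b 1) := by
        rw [show a 0 = 1 - a 1 by linarith, show b 0 = 1 - b 1 by linarith]
      rw [this]
      have : lam * (1 - a 1) + (1 - lam) * (1 - b 1) = 1 - (lam * a 1 + (1 - lam) * b 1) := by ring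
      rw [this, h1]
      linarith [hc0]
    · show c 1 = lam * a 1 + (1 - lam) * b 1
      rw [h1]
    · show c 2 = lam * a 2 + (1 - lam) * b 2
      rw [h a ha, h b hb, h c hc]
      ring
  have := unique3 hs hseq' hab hac hbc
    (a := lam) (b := 1 - lam) (c := 0) (a' := 0) (b' := 0) (c' := 1)
    (by ring) (by ring)
    (by simp only [zero_smul, one_smul, add_zero, zero_add]; exact hcc.symm)
  exact one_ne_zero this.2.2.symm

/-- a shared bottom edge: the two cells must coincide -/
lemma bottom_unique {s t : Finset V3} (hs : s ∈ T.cells) (ht : t ∈ T.cells)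
    {u v : V3} (hu : u ∈ s) (hv : v ∈ s) (huv : u ≠ v) (hut : u ∈ t) (hvt : v ∈ t)
    (hu2 : u 2 = 0) (hv2 : v 2 = 0) : s = t := by
  by_contra hst
  obtain ⟨w, hws, hwu, hwv, hseq⟩ := exists_apex hs hu hv huv
  obtain ⟨z, hzt, hzu, hzv, hteq⟩ := exists_apex ht hut hvt huv
  have hw2 : 0 < w 2 := by
    rcases (vert_nonneg hs hws 2).lt_or_eq with h | h
    · exact h
    · exfalso
      apply not_all_bottom hs
      intro y hy
      rw [hseq] at hy
      simp only [Finset.mem_insert, Finset.mem_singleton] at hy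
      rcases hy with rfl | rfl | rfl
      · exact hu2
      · exact hv2
      · exact h.symm
  have hz2 : 0 < z 2 := by
    rcases (vert_nonneg ht hzt 2).lt_or_eq with h | h
    · exact h
    · exfalso
      apply not_all_bottom ht
      intro y hy
      rw [hteq] at hy
      simp only [Finset.mem_insert, Finset.mem_singleton] at hy
      rcases hy with rfl | rfl | rfl
      · exact hu2
      · exact hv2
      · exact h.symm
  have huw : u ≠ w := Ne.symm hwu
  have hvw : v ≠ w := Ne.symm hwv
  obtain ⟨a, b, c, habc, hzc⟩ := expand3 hs hseq huv huw hvw (vert_sum ht hzt)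
  have hz2' : z 2 = c * w 2 := by
    have := congrFun hzc 2
    simp only [Pi.add_apply, Pi.smul_apply, smul_eq_mul] at this
    rw [this, hu2, hv2]
    ring
  have hc : 0 < c := by
    rcases lt_trichotomy c 0 with h | h | h
    · nlinarith
    · rw [h] at hz2'; simp at hz2'; linarith
    · exact h
  exact pair_lemma hs ht hst hu hv hws huv huw hvw hut hvt hzt hc habc hzc

/-- no three distinct cells share an edge -/
lemma at_most_two {s t r : Finset V3} (hs : s ∈ T.cells) (ht : t ∈ T.cells) (hr : r ∈ T.cells)
    (hst : s ≠ t) (hsr : s ≠ r) (htr : t ≠ r) {u v : V3} (huv : u ≠ v)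
    (hus : u ∈ s) (hvs : v ∈ s) (hut : u ∈ t) (hvt : v ∈ t) (hur : u ∈ r) (hvr : v ∈ r) :
    False := by
  obtain ⟨w, hws, hwu, hwv, hseq⟩ := exists_apex hs hus hvs huv
  obtain ⟨z, hzt, hzu, hzv, hteq⟩ := exists_apex ht hut hvt huv
  obtain ⟨y, hyr, hyu, hyv, hreq⟩ := exists_apex hr hur hvr huv
  have huw : u ≠ w := Ne.symm hwu
  have hvw : v ≠ w := Ne.symm hwv
  have huz : u ≠ z := Ne.symm hzu
  have hvz : v ≠ z := Ne.symm hzv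
  -- expand z and y in s-coordinates
  obtain ⟨a, b, c, habc, hzc⟩ := expand3 hs hseq huv huw hvw (vert_sum ht hzt)
  obtain ⟨a', b', c', habc', hyc⟩ := expand3 hs hseq huv huw hvw (vert_sum hr hyr)
  have hcne : c ≠ 0 := by
    intro h0
    rw [h0] at habc hzc
    have := unique3 ht hteq huv huz hvz (a := a) (b := b) (c := 0) (a' := 0) (b' := 0) (c' := 1)
      (by linarith) (by ring) ?_
    · exact one_ne_zero this.2.2.symm
    · simp only [zero_smul, one_smul, add_zero, zero_add]
      rw [hzc, zero_smul, add_zero]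
  have hcne' : c' ≠ 0 := by
    intro h0
    rw [h0] at habc' hyc
    have := unique3 hr hreq huv hyu.symm hyv.symm
      (a := a') (b := b') (c := 0) (a' := 0) (b' := 0) (c' := 1)
      (by linarith) (by ring) ?_
    · exact one_ne_zero this.2.2.symm
    · simp only [zero_smul, one_smul, add_zero, zero_add]
      rw [hyc, zero_smul, add_zero]
  rcases lt_or_gt_of_ne hcne with hcneg | hcpos
  swap
  · exact pair_lemma hs ht hst hus hvs hws huv huw hvw hut hvt hzt hcpos habc hzc
  rcases lt_or_gt_of_ne hcne' with hcneg' | hcpos'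
  swap
  · exact pair_lemma hs hr hsr hus hvs hws huv huw hvw hur hvr hyr hcpos' habc' hyc
  -- both apexes on the negative side: expand y in t-coordinates
  obtain ⟨d, e, f, hdef, hyt⟩ := expand3 ht hteq huv huz hvz (vert_sum hr hyr)
  -- y = d u + e v + f z = (d + f a) u + (e + f b) v + (f c) w
  have hcomb : y = (d + f * a) • u + (e + f * b) • v + (f * c) • w := by
    rw [hyt, hzc]
    module
  have := unique3 hs hseq huv huw hvw (a := a') (b := b') (c := c')
    (a' := d + f * a) (b' := e + f * b) (c' := f * c)
    habc'
    (by
      have h3 : f * (a + b + c) = f := by rw [habc, mul_one]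
      linarith [h3])
    (by rw [← hyc, ← hcomb])
  have hfc : c' = f * c := this.2.2
  have hf : 0 < f := by
    by_contra hcon
    push_neg at hcon
    have : 0 ≤ f * c := by nlinarith
    linarith
  exact pair_lemma ht hr htr hut hvt hzt huv huz hvz hur hvr hyr hf hdef hyt

/-- an edge whose midpoint is interior lies in a second cell -/
lemma second_cell {s : Finset V3} (hs : s ∈ T.cells) {u v : V3}
    (hus : u ∈ s) (hvs : v ∈ s) (huv : u ≠ v) (hmid : ∀ i, 0 < u i + v i) :
    ∃ t ∈ T.cells, t ≠ s ∧ u ∈ t ∧ v ∈ t := by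
  classical
  obtain ⟨w, hws, hwu, hwv, hseq⟩ := exists_apex hs hus hvs huv
  have huw : u ≠ w := Ne.symm hwu
  have hvw : v ≠ w := Ne.symm hwv
  set m : V3 := (1/2 : ℝ) • u + (1/2 : ℝ) • v with hm
  have hm_mem : ∀ t ∈ T.cells, t ≠ s → u ∈ t → v ∈ t → True := fun _ _ _ _ _ => trivial
  -- first find t ≠ s with m ∈ convexHull t
  have key : ∃ t ∈ T.cells, t ≠ s ∧ m ∈ convexHull ℝ (t : Set V3) := by
    by_contra hcon
    push_neg at hcon
    set C : Set V3 := ⋃ t ∈ T.cells.erase s, convexHull ℝ (t : Set V3) with hC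
    have hCclosed : IsClosed C := by
      apply Set.Finite.isClosed_biUnion (Finset.finite_toSet _)
      intro t _
      exact ((Finset.finite_toSet t).isCompact_convexHull ℝ).isClosed
    have hmC : m ∉ C := by
      intro hmem
      rw [hC] at hmem
      obtain ⟨t, ht, hmt⟩ := Set.mem_iUnion₂.1 hmem
      rw [Finset.mem_erase] at ht
      exact hcon t ht.2 ht.1 hmt
    obtain ⟨ρ, hρ0, hball⟩ := Metric.isOpen_iff.1 hCclosed.isOpen_compl m hmC
    -- pick ε small
    have htend : Filter.Tendsto (fun ε : ℝ => (1 + ε) • m - ε • w) (nhds 0) (nhds m) := by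
      have : Continuous (fun ε : ℝ => (1 + ε) • m - ε • w) := by continuity
      have h0 : (fun ε : ℝ => (1 + ε) • m - ε • w) 0 = m := by simp
      simpa [h0] using this.tendsto 0
    have hev1 : ∀ᶠ ε : ℝ in nhds 0, (1 + ε) • m - ε • w ∈ Metric.ball m ρ :=
      htend (Metric.ball_mem_nhds m hρ0)
    have hev2 : ∀ᶠ ε : ℝ in nhds 0, ∀ i, 0 < ((1 + ε) • m - ε • w) i := by
      rw [Filter.eventually_all]
      intro i
      have hco : Filter.Tendsto (fun ε : ℝ => ((1 + ε) • m - ε • w) i) (nhds 0) (nhds (m i)) :=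
        (continuous_apply i).continuousAt.tendsto.comp htend
      have hmi : 0 < m i := by
        have := hmid i
        simp only [hm, Pi.add_apply, Pi.smul_apply, smul_eq_mul]
        linarith
      exact hco.eventually (eventually_gt_nhds hmi)
    have hev3 : ∀ᶠ ε : ℝ in nhds 0, (0:ℝ) < 1 + ε := by
      have hco : Filter.Tendsto (fun ε : ℝ => 1 + ε) (nhds 0) (nhds 1) := by
        exact (continuous_const.add continuous_id).tendsto' 0 1 (by simp)
      exact hco.eventually (eventually_gt_nhds one_pos)
    have hall : ∀ᶠ ε : ℝ in nhdsWithin 0 (Set.Ioi (0:ℝ)),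
        ((1 + ε) • m - ε • w ∈ Metric.ball m ρ ∧ (∀ i, 0 < ((1 + ε) • m - ε • w) i) ∧ 0 < 1 + ε) :=
      (hev1.and (hev2.and hev3)).filter_mono nhdsWithin_le_nhds
    obtain ⟨ε, ⟨hball', hpos, h1ε⟩, hε0⟩ :=
      (hall.and (self_mem_nhdsWithin (s := Set.Ioi (0:ℝ)) (a := 0))).exists
    set q : V3 := (1 + ε) • m - ε • w with hq
    have hqsum : ∑ i, q i = 1 := by
      have hus' := vert_sum hs hus
      have hvs' := vert_sum hs hvs
      have hws' := vert_sum hs hws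
      rw [Fin.sum_univ_three] at hus' hvs' hws' ⊢
      simp only [hq, hm, Pi.sub_apply, Pi.add_apply, Pi.smul_apply, smul_eq_mul]
      ring_nf
      ring_nf at hus' hvs' hws'
      nlinarith [hus', hvs', hws']
    have hqsimplex : q ∈ stdSimplex ℝ (Fin 3) := ⟨fun i => (hpos i).le, hqsum⟩
    rw [← T.covers] at hqsimplex
    obtain ⟨t, ht, hqt⟩ := Set.mem_iUnion₂.1 hqsimplex
    have hts : t ≠ s := by
      rintro rfl
      obtain ⟨g1, g2, g3, hg1, hg2, hg3, hgsum, hgeq⟩ := mem_hull3 hseq huv huw hvw hqt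
      have hqc : q = ((1 + ε)/2) • u + ((1 + ε)/2) • v + (-ε) • w := by
        rw [hq, hm]
        module
      have := unique3 hs hseq huv huw hvw (a := g1) (b := g2) (c := g3)
        (a' := (1 + ε)/2) (b' := (1 + ε)/2) (c' := -ε) hgsum (by ring)
        (by rw [← hgeq, ← hqc])
      linarith [this.2.2]
    apply hball hball'
    rw [hC]
    exact Set.mem_biUnion (Finset.mem_erase.2 ⟨hts, ht⟩) hqt
  obtain ⟨t, ht, hts, hmt⟩ := key
  have hms : m ∈ convexHull ℝ (s : Set V3) :=
    (convex_convexHull ℝ _) (subset_convexHull ℝ _ hus) (subset_convexHull ℝ _ hvs)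
      (by norm_num) (by norm_num) (by norm_num)
  have hmint : m ∈ convexHull ℝ ((s ∩ t : Finset V3) : Set V3) := by
    rw [← T.face_to_face s hs t ht]
    exact ⟨hms, hmt⟩
  rw [Finset.mem_convexHull'] at hmint
  obtain ⟨g, hg0, hg1, hg2⟩ := hmint
  set G : V3 → ℝ := fun x => if x ∈ s ∩ t then g x else 0 with hG
  have hGsum : ∑ x ∈ s, G x = 1 := by
    rw [hG]
    rw [Finset.sum_ite_mem s (s ∩ t) g]
    rw [show s ∩ (s ∩ t) = s ∩ t by rw [← Finset.inter_assoc, Finset.inter_self]]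
    exact hg1
  have hGvec : ∑ x ∈ s, G x • x = m := by
    have : ∀ x ∈ s, G x • x = (fun y => if y ∈ s ∩ t then g y • y else 0) x := by
      intro x _
      rw [hG]
      by_cases hx : x ∈ s ∩ t <;> simp [hx]
    rw [Finset.sum_congr rfl this, Finset.sum_ite_mem s (s ∩ t) (fun y => g y • y),
      show s ∩ (s ∩ t) = s ∩ t by rw [← Finset.inter_assoc, Finset.inter_self]]
    exact hg2
  rw [hseq, sum3 huv huw hvw G] at hGsum
  rw [hseq, sum3 huv huw hvw (f := fun x => G x • x)] at hGvec
  have := unique3 hs hseq huv huw hvw (a := G u) (b := G v) (c := G w)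
    (a' := 1/2) (b' := 1/2) (c' := 0) hGsum (by ring)
    (by rw [hGvec, hm, zero_smul, add_zero])
  have hGu : G u = 1/2 := this.1
  have hGv : G v = 1/2 := this.2.1
  have hu_int : u ∈ s ∩ t := by
    by_contra hcon
    rw [hG] at hGu
    simp only [hcon, if_false] at hGu
    norm_num at hGu
  have hv_int : v ∈ s ∩ t := by
    by_contra hcon
    rw [hG] at hGv
    simp only [hcon, if_false] at hGv
    norm_num at hGv
  exact ⟨t, ht, hts, (Finset.mem_inter.1 hu_int).2, (Finset.mem_inter.1 hv_int).2⟩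

lemma mem_verts_simplex {v : V3} (hv : v ∈ T.verts) : v ∈ stdSimplex ℝ (Fin 3) := by
  obtain ⟨s, hs, hvs⟩ := Finset.mem_sup.1 hv
  exact vert_mem_simplex hs hvs

/-- the bottom-edge point with second coordinate `c` -/
noncomputable def bpt (c : ℝ) : V3 := ![1 - c, c, 0]

lemma bpt_apply0 (c : ℝ) : bpt c 0 = 1 - c := rfl
lemma bpt_apply1 (c : ℝ) : bpt c 1 = c := rfl
lemma bpt_apply2 (c : ℝ) : bpt c 2 = 0 := rfl

lemma bottom_eq_bpt {v : V3} (hsum : ∑ i, v i = 1) (h2 : v 2 = 0) : v = bpt (v 1) := by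
  rw [Fin.sum_univ_three] at hsum
  funext i
  fin_cases i
  · show v 0 = 1 - v 1
    linarith
  · rfl
  · exact h2

/-- points of the convex hull with vanishing `i`-th coordinate lie in the hull of the
corresponding face -/
lemma hull_face {F : Finset V3} {x : V3} (hx : x ∈ convexHull ℝ (F : Set V3))
    (hF : ∀ v ∈ F, 0 ≤ v 2) (hx2 : x 2 = 0) :
    x ∈ convexHull ℝ ((F.filter (fun v => v 2 = 0) : Finset V3) : Set V3) := by
  classical
  rw [Finset.mem_convexHull'] at hx ⊢
  obtain ⟨g, hg0, hg1, hg2⟩ := hx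
  have hzero : ∀ v ∈ F, g v * v 2 = 0 := by
    have hsum0 : ∑ v ∈ F, g v * v 2 = 0 := by
      have := congrFun hg2 2
      simp only [Finset.sum_apply, Pi.smul_apply, smul_eq_mul] at this
      rw [this, hx2]
    intro v hv
    have := (Finset.sum_eq_zero_iff_of_nonneg (fun v hv => mul_nonneg (hg0 v hv) (hF v hv))).1
      hsum0 v hv
    exact this
  refine ⟨g, fun y hy => hg0 y (Finset.mem_filter.1 hy).1, ?_, ?_⟩
  · rw [← hg1]
    apply Finset.sum_subset (Finset.filter_subset _ _)
    intro y hy hyn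
    rw [Finset.mem_filter] at hyn
    push_neg at hyn
    have h2ne : y 2 ≠ 0 := hyn hy
    have := hzero y hy
    rcases mul_eq_zero.1 this with h | h
    · exact h
    · exact absurd h h2ne
  · rw [← hg2]
    apply Finset.sum_subset (Finset.filter_subset _ _)
    intro y hy hyn
    rw [Finset.mem_filter] at hyn
    push_neg at hyn
    have h2ne : y 2 ≠ 0 := hyn hy
    have := hzero y hy
    rcases mul_eq_zero.1 this with h | h
    · rw [h, zero_smul]
    · exact absurd h h2ne

/-- sum of a two-point-supported coefficient function -/
lemma sum_pair_support {s : Finset V3} {a b : V3} (ha : a ∈ s) (hb : b ∈ s) (hab : a ≠ b)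
    (r1 r2 : ℝ) :
    ∑ x ∈ s, (if x = a then r1 else if x = b then r2 else 0) = r1 + r2 := by
  classical
  rw [← Finset.sum_subset (show ({a, b} : Finset V3) ⊆ s by
    intro x hx
    simp only [Finset.mem_insert, Finset.mem_singleton] at hx
    rcases hx with rfl | rfl <;> assumption)]
  · rw [sum2 hab]
    simp [Ne.symm hab]
  · intro x _ hxn
    simp only [Finset.mem_insert, Finset.mem_singleton] at hxn
    push_neg at hxn
    rw [if_neg hxn.1, if_neg hxn.2]

lemma sum_pair_support_smul {s : Finset V3} {a b : V3} (ha : a ∈ s) (hb : b ∈ s) (hab : a ≠ b)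
    (r1 r2 : ℝ) :
    ∑ x ∈ s, (if x = a then r1 else if x = b then r2 else 0) • x = r1 • a + r2 • b := by
  classical
  rw [← Finset.sum_subset (show ({a, b} : Finset V3) ⊆ s by
    intro x hx
    simp only [Finset.mem_insert, Finset.mem_singleton] at hx
    rcases hx with rfl | rfl <;> assumption)]
  · rw [sum2 hab (f := fun x => (if x = a then r1 else if x = b then r2 else 0) • x)]
    simp [Ne.symm hab]
  · intro x _ hxn
    simp only [Finset.mem_insert, Finset.mem_singleton] at hxn
    push_neg at hxn
    rw [if_neg hxn.1, if_neg hxn.2, zero_smul]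

lemma coord1_le_one {v : V3} (h : v ∈ stdSimplex ℝ (Fin 3)) : v 1 ≤ 1 := by
  have h2 := h.2
  rw [Fin.sum_univ_three] at h2
  linarith [h.1 0, h.1 2]

/-- the bottom segments of the triangulation, as (left, right) pairs of `x₁`-coordinates -/
noncomputable def BS (T : Triangulation 2) : Finset (ℝ × ℝ) :=
  ((T.verts ×ˢ T.verts).filter (fun q => q.1 2 = 0 ∧ q.2 2 = 0 ∧ q.1 1 < q.2 1 ∧
    ∃ s ∈ T.cells, q.1 ∈ s ∧ q.2 ∈ s)).image (fun q => (q.1 1, q.2 1))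

lemma mem_BS_iff {p : ℝ × ℝ} : p ∈ BS T ↔ ∃ a b : V3, a ∈ T.verts ∧ b ∈ T.verts ∧
    a 2 = 0 ∧ b 2 = 0 ∧ a 1 < b 1 ∧ (∃ s ∈ T.cells, a ∈ s ∧ b ∈ s) ∧ p = (a 1, b 1) := by
  classical
  constructor
  · intro hp
    obtain ⟨q, hq, hqe⟩ := Finset.mem_image.1 hp
    rw [Finset.mem_filter, Finset.mem_product] at hq
    exact ⟨q.1, q.2, hq.1.1, hq.1.2, hq.2.1, hq.2.2.1, hq.2.2.2.1, hq.2.2.2.2, hqe.symm⟩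
  · rintro ⟨a, b, h1, h2, h3, h4, h5, h6, rfl⟩
    apply Finset.mem_image.2
    refine ⟨(a, b), ?_, rfl⟩
    rw [Finset.mem_filter, Finset.mem_product]
    exact ⟨⟨h1, h2⟩, h3, h4, h5, h6⟩

lemma BS_bounds : ∀ p ∈ BS T, 0 ≤ p.1 ∧ p.1 < p.2 ∧ p.2 ≤ 1 := by
  intro p hp
  obtain ⟨a, b, ha, hb, _, _, hlt, _, rfl⟩ := mem_BS_iff.1 hp
  exact ⟨(mem_verts_simplex ha).1 1, hlt, coord1_le_one (mem_verts_simplex hb)⟩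

lemma BS_endpoints : ∀ p ∈ BS T, p.1 ∈ T.verts.image (fun v => v 1) ∧
    p.2 ∈ T.verts.image (fun v => v 1) := by
  classical
  intro p hp
  obtain ⟨a, b, ha, hb, _, _, _, _, rfl⟩ := mem_BS_iff.1 hp
  exact ⟨Finset.mem_image_of_mem _ ha, Finset.mem_image_of_mem _ hb⟩

/-- convex combination of two bottom points -/
lemma bpt_comb {a b : V3} (ha : a = bpt (a 1)) (hb : b = bpt (b 1)) (hne : a 1 < b 1) (θ : ℝ) :
    bpt θ = ((b 1 - θ)/(b 1 - a 1)) • a + (1 - (b 1 - θ)/(b 1 - a 1)) • b := by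
  have hd : b 1 - a 1 ≠ 0 := by linarith
  rw [ha, hb]
  funext i
  simp only [bpt, Pi.add_apply, Pi.smul_apply, smul_eq_mul]
  fin_cases i <;>
    simp only [Fin.zero_eta, Fin.mk_one, Fin.reduceFinMk, Matrix.cons_val_zero, Matrix.cons_val_one, Matrix.head_cons,
      Matrix.cons_val_two, Matrix.tail_cons] <;>
    field_simp <;>
    ring

lemma BS_cover : ∀ c : ℝ, 0 ≤ c → c ≤ 1 → c ∉ T.verts.image (fun v => v 1) →
    ∃ p ∈ BS T, p.1 ≤ c ∧ c ≤ p.2 := by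
  classical
  intro c hc0 hc1 hcW
  have hbs : bpt c ∈ stdSimplex ℝ (Fin 3) := by
    constructor
    · intro i
      fin_cases i
      · show (0:ℝ) ≤ 1 - c; linarith
      · exact hc0
      · exact le_refl 0
    · rw [Fin.sum_univ_three, bpt_apply0, bpt_apply1, bpt_apply2]
      ring
  rw [← T.covers] at hbs
  obtain ⟨t, ht, hbt⟩ := Set.mem_iUnion₂.1 hbs
  set B : Finset V3 := t.filter (fun v => v 2 = 0) with hB
  have hBt : B ⊆ t := Finset.filter_subset _ _
  have hmem : bpt c ∈ convexHull ℝ (B : Set V3) :=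
    hull_face hbt (fun v hv => vert_nonneg ht hv 2) (bpt_apply2 c)
  have hBne : B.Nonempty := by
    by_contra hcon
    rw [Finset.not_nonempty_iff_eq_empty] at hcon
    rw [hcon] at hmem
    simp at hmem
  have hBcard : B.card ≤ 2 := by
    by_contra hcon
    push_neg at hcon
    have hBeq : B = t := Finset.eq_of_subset_of_card_le hBt (by rw [T.card_cells t ht]; omega)
    apply not_all_bottom ht
    intro y hy
    rw [← hBeq] at hy
    exact (Finset.mem_filter.1 hy).2
  interval_cases h : B.card
  · exact absurd (Finset.card_eq_zero.1 h) (Finset.nonempty_iff_ne_empty.1 hBne)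
  · obtain ⟨a, hBa⟩ := Finset.card_eq_one.1 h
    rw [hBa] at hmem
    simp only [Finset.coe_singleton, convexHull_singleton, Set.mem_singleton_iff] at hmem
    exfalso
    apply hcW
    have haB : a ∈ B := by rw [hBa]; exact Finset.mem_singleton_self a
    have haT : a ∈ T.verts := subset_verts ht (hBt haB)
    apply Finset.mem_image.2
    refine ⟨a, haT, ?_⟩
    rw [← hmem, bpt_apply1]
  · obtain ⟨a, b, hab, hBab⟩ := Finset.card_eq_two.1 h
    have haB : a ∈ B := by rw [hBab]; simp
    have hbB : b ∈ B := by rw [hBab]; simp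
    have ha2 : a 2 = 0 := (Finset.mem_filter.1 haB).2
    have hb2 : b 2 = 0 := (Finset.mem_filter.1 hbB).2
    have hat : a ∈ t := hBt haB
    have hbt' : b ∈ t := hBt hbB
    have haV : a ∈ T.verts := subset_verts ht hat
    have hbV : b ∈ T.verts := subset_verts ht hbt'
    have hab1 : a 1 ≠ b 1 := by
      intro hcontra
      apply hab
      rw [bottom_eq_bpt (vert_sum ht hat) ha2, bottom_eq_bpt (vert_sum ht hbt') hb2, hcontra]
    -- representation of bpt c in conv {a, b}
    rw [hBab, Finset.mem_convexHull'] at hmem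
    obtain ⟨g, hg0, hg1, hg2⟩ := hmem
    rw [sum2 hab] at hg1
    rw [sum2 hab (f := fun y => g y • y)] at hg2
    have hc_eq : c = g a * a 1 + g b * b 1 := by
      have := congrFun hg2 1
      simp only [Pi.add_apply, Pi.smul_apply, smul_eq_mul] at this
      exact this.symm
    have hga : 0 ≤ g a := hg0 a (by simp)
    have hgb : 0 ≤ g b := hg0 b (by simp)
    rcases lt_or_gt_of_ne hab1 with hlt | hgt
    · refine ⟨(a 1, b 1), mem_BS_iff.2 ⟨a, b, haV, hbV, ha2, hb2, hlt, ⟨t, ht, hat, hbt'⟩, rfl⟩, ?_, ?_⟩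
      · show a 1 ≤ c
        rw [hc_eq]
        nlinarith
      · show c ≤ b 1
        rw [hc_eq]
        nlinarith
    · refine ⟨(b 1, a 1), mem_BS_iff.2 ⟨b, a, hbV, haV, hb2, ha2, hgt, ⟨t, ht, hbt', hat⟩, rfl⟩, ?_, ?_⟩
      · show b 1 ≤ c
        rw [hc_eq]
        nlinarith
      · show c ≤ a 1
        rw [hc_eq]
        nlinarith

/-- if a proper convex combination of two vertices of a cell lies in another cell, the two
vertices belong to that cell as well -/
lemma pair_in_cell {s t : Finset V3} (hs : s ∈ T.cells) (ht : t ∈ T.cells)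
    {a b : V3} (ha : a ∈ s) (hb : b ∈ s) (hab : a ≠ b) {x : V3} {lam : ℝ}
    (hl0 : 0 < lam) (hl1 : lam < 1) (hx : x = lam • a + (1 - lam) • b)
    (hxt : x ∈ convexHull ℝ (t : Set V3)) : a ∈ t ∧ b ∈ t := by
  classical
  by_cases hst : s = t
  · rw [← hst]; exact ⟨ha, hb⟩
  have hxs : x ∈ convexHull ℝ (s : Set V3) := by
    rw [Finset.mem_convexHull']
    refine ⟨fun y => if y = a then lam else if y = b then 1 - lam else 0, ?_, ?_, ?_⟩
    · intro y _
      show (0:ℝ) ≤ if y = a then lam else if y = b then 1 - lam else 0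
      by_cases h1 : y = a
      · rw [if_pos h1]; linarith
      · rw [if_neg h1]
        by_cases h2 : y = b
        · rw [if_pos h2]; linarith
        · rw [if_neg h2]
    · rw [sum_pair_support ha hb hab]; ring
    · rw [sum_pair_support_smul ha hb hab, hx]
  have hxint : x ∈ convexHull ℝ ((s ∩ t : Finset V3) : Set V3) := by
    rw [← T.face_to_face s hs t ht]
    exact ⟨hxs, hxt⟩
  rw [Finset.mem_convexHull'] at hxint
  obtain ⟨g, hg0, hg1, hg2⟩ := hxint
  set G : V3 → ℝ := fun y => if y ∈ s ∩ t then g y else 0 with hG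
  have hGsum : ∑ y ∈ s, G y = 1 := by
    rw [hG, Finset.sum_ite_mem s (s ∩ t) g,
      show s ∩ (s ∩ t) = s ∩ t by rw [← Finset.inter_assoc, Finset.inter_self]]
    exact hg1
  have hGvec : ∑ y ∈ s, G y • y = x := by
    have : ∀ y ∈ s, G y • y = (fun z => if z ∈ s ∩ t then g z • z else 0) y := by
      intro y _
      rw [hG]
      by_cases hy : y ∈ s ∩ t <;> simp [hy]
    rw [Finset.sum_congr rfl this, Finset.sum_ite_mem s (s ∩ t) (fun z => g z • z),
      show s ∩ (s ∩ t) = s ∩ t by rw [← Finset.inter_assoc, Finset.inter_self]]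
    exact hg2
  have key := unique_coeffs (T.indep s hs)
    (w1 := fun y => if y = a then lam else if y = b then 1 - lam else 0) (w2 := G)
    (by rw [sum_pair_support ha hb hab]; ring) hGsum
    (by rw [sum_pair_support_smul ha hb hab, hGvec, hx])
  constructor
  · have hthis : (if a = a then lam else if a = b then 1 - lam else 0) = G a := key a ha
    simp only [eq_self_iff_true, if_true] at hthis
    by_contra hcon
    have hz : lam = 0 := by
      rw [hthis]
      show (if a ∈ s ∩ t then g a else 0) = 0
      rw [if_neg]
      intro hmem
      exact hcon (Finset.mem_inter.1 hmem).2
    linarith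
  · have hthis : (if b = a then lam else if b = b then 1 - lam else 0) = G b := key b hb
    rw [if_neg (Ne.symm hab)] at hthis
    simp only [eq_self_iff_true, if_true] at hthis
    by_contra hcon
    have hz : 1 - lam = 0 := by
      rw [hthis]
      show (if b ∈ s ∩ t then g b else 0) = 0
      rw [if_neg]
      intro hmem
      exact hcon (Finset.mem_inter.1 hmem).2
    linarith

/-- two proper-convex-combination representations within one cell must use the same pair -/
lemma seg_unique {t : Finset V3} (ht : t ∈ T.cells) {a b a' b' : V3}
    (hat : a ∈ t) (hbt : b ∈ t) (hat' : a' ∈ t) (hbt' : b' ∈ t)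
    (hab : a ≠ b) (hab' : a' ≠ b') {x : V3} {lam mu : ℝ}
    (hl0 : 0 < lam) (hl1 : lam < 1) (hm0 : 0 < mu) (hm1 : mu < 1)
    (hx : x = lam • a + (1 - lam) • b) (hx' : x = mu • a' + (1 - mu) • b') :
    (a = a' ∧ b = b') ∨ (a = b' ∧ b = a') := by
  classical
  set w1 : V3 → ℝ := fun y => if y = a then lam else if y = b then 1 - lam else 0 with hw1
  set w2 : V3 → ℝ := fun y => if y = a' then mu else if y = b' then 1 - mu else 0 with hw2
  have key := unique_coeffs (T.indep t ht) (w1 := w1) (w2 := w2)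
    (by rw [hw1, sum_pair_support hat hbt hab]; ring)
    (by rw [hw2, sum_pair_support hat' hbt' hab']; ring)
    (by rw [hw1, hw2, sum_pair_support_smul hat hbt hab, sum_pair_support_smul hat' hbt' hab',
      ← hx, ← hx'])
  have hka : (if a = a then lam else if a = b then 1 - lam else 0)
      = (if a = a' then mu else if a = b' then 1 - mu else 0) := key a hat
  have hkb : (if b = a then lam else if b = b then 1 - lam else 0)
      = (if b = a' then mu else if b = b' then 1 - mu else 0) := key b hbt
  simp only [eq_self_iff_true, if_true] at hka
  rw [if_neg (Ne.symm hab)] at hkb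
  simp only [eq_self_iff_true, if_true] at hkb
  by_cases haa : a = a'
  · left
    refine ⟨haa, ?_⟩
    by_cases hbb : b = b'
    · exact hbb
    · exfalso
      rw [if_neg (haa ▸ Ne.symm hab), if_neg hbb] at hkb
      linarith
  · right
    rw [if_neg haa] at hka
    by_cases hab2 : a = b'
    · refine ⟨hab2, ?_⟩
      by_cases hba : b = a'
      · exact hba
      · exfalso
        rw [if_neg hba, if_neg (hab2 ▸ Ne.symm hab)] at hkb
        linarith
    · exfalso
      rw [if_neg hab2] at hka
      linarith

lemma BS_disjoint : ∀ p ∈ BS T, ∀ q ∈ BS T, p ≠ q → q.2 ≤ p.1 ∨ p.2 ≤ q.1 := by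
  intro p hp q hq hpq
  by_contra hcon
  push_neg at hcon
  obtain ⟨h1, h2⟩ := hcon
  obtain ⟨a, b, haV, hbV, ha2, hb2, hab1, ⟨s, hs, has, hbs⟩, hpe⟩ := mem_BS_iff.1 hp
  obtain ⟨a', b', haV', hbV', ha2', hb2', hab1', ⟨t, ht, hat, hbt⟩, hqe⟩ := mem_BS_iff.1 hq
  rw [hpe, hqe] at hpq h1 h2
  simp only at h1 h2
  have hab : a ≠ b := fun h => absurd (congrFun h 1) (ne_of_lt hab1)
  have hab' : a' ≠ b' := fun h => absurd (congrFun h 1) (ne_of_lt hab1')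
  set θ : ℝ := (max (a 1) (a' 1) + min (b 1) (b' 1)) / 2 with hθ
  have hmaxmin : max (a 1) (a' 1) < min (b 1) (b' 1) := by
    rw [max_lt_iff, lt_min_iff, lt_min_iff]
    exact ⟨⟨hab1, h1⟩, h2, hab1'⟩
  have hθa : a 1 < θ := by
    have := le_max_left (a 1) (a' 1)
    rw [hθ]; linarith [hmaxmin]
  have hθa' : a' 1 < θ := by
    have := le_max_right (a 1) (a' 1)
    rw [hθ]; linarith [hmaxmin]
  have hθb : θ < b 1 := by
    have := min_le_left (b 1) (b' 1)
    rw [hθ]; linarith [hmaxmin]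
  have hθb' : θ < b' 1 := by
    have := min_le_right (b 1) (b' 1)
    rw [hθ]; linarith [hmaxmin]
  set lam : ℝ := (b 1 - θ) / (b 1 - a 1) with hlam
  set mu : ℝ := (b' 1 - θ) / (b' 1 - a' 1) with hmu
  have hl0 : 0 < lam := div_pos (by linarith) (by linarith)
  have hl1 : lam < 1 := by
    rw [hlam, div_lt_one (by linarith)]
    linarith
  have hm0 : 0 < mu := div_pos (by linarith) (by linarith)
  have hm1 : mu < 1 := by
    rw [hmu, div_lt_one (by linarith)]
    linarith
  have hxa : bpt θ = lam • a + (1 - lam) • b :=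
    bpt_comb (bottom_eq_bpt (vert_sum hs has) ha2) (bottom_eq_bpt (vert_sum hs hbs) hb2) hab1 θ
  have hxa' : bpt θ = mu • a' + (1 - mu) • b' :=
    bpt_comb (bottom_eq_bpt (vert_sum ht hat) ha2') (bottom_eq_bpt (vert_sum ht hbt) hb2') hab1' θ
  have hxt : bpt θ ∈ convexHull ℝ (t : Set V3) := by
    rw [hxa']
    exact (convex_convexHull ℝ _) (subset_convexHull ℝ _ hat) (subset_convexHull ℝ _ hbt)
      hm0.le (by linarith) (by ring)
  obtain ⟨hat2, hbt2⟩ := pair_in_cell hs ht has hbs hab hl0 hl1 hxa hxt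
  rcases seg_unique ht hat2 hbt2 hat hbt hab hab' hl0 hl1 hm0 hm1 hxa hxa' with ⟨e1, e2⟩ | ⟨e1, e2⟩
  · exact hpq (by rw [e1, e2])
  · have : a 1 = b' 1 := by rw [e1]
    have : b 1 = a' 1 := by rw [e2]
    linarith

lemma mult_bottom {s : Finset V3} (hs : s ∈ T.cells) {u v : V3} (hus : u ∈ s) (hvs : v ∈ s)
    (huv : u ≠ v) (hu2 : u 2 = 0) (hv2 : v 2 = 0) :
    (T.cells.filter (fun t => u ∈ t ∧ v ∈ t)).card = 1 := by
  rw [Finset.card_eq_one]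
  refine ⟨s, ?_⟩
  rw [Finset.eq_singleton_iff_unique_mem]
  refine ⟨Finset.mem_filter.2 ⟨hs, hus, hvs⟩, ?_⟩
  intro t htf
  rw [Finset.mem_filter] at htf
  exact bottom_unique htf.1 hs htf.2.1 htf.2.2 huv hus hvs hu2 hv2

lemma mult_interior {s : Finset V3} (hs : s ∈ T.cells) {u v : V3} (hus : u ∈ s) (hvs : v ∈ s)
    (huv : u ≠ v) (hmid : ∀ i, 0 < u i + v i) :
    (T.cells.filter (fun t => u ∈ t ∧ v ∈ t)).card = 2 := by
  obtain ⟨t, ht, hts, hut, hvt⟩ := second_cell hs hus hvs huv hmid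
  have hfeq : T.cells.filter (fun r => u ∈ r ∧ v ∈ r) = {s, t} := by
    apply Finset.Subset.antisymm
    · intro r hr
      rw [Finset.mem_filter] at hr
      simp only [Finset.mem_insert, Finset.mem_singleton]
      by_contra hcon
      push_neg at hcon
      exact at_most_two hs ht hr.1 (Ne.symm hts) (Ne.symm hcon.1) (Ne.symm hcon.2)
        huv hus hvs hut hvt hr.2.1 hr.2.2
    · intro r hr
      simp only [Finset.mem_insert, Finset.mem_singleton] at hr
      rcases hr with rfl | rfl
      · exact Finset.mem_filter.2 ⟨hs, hus, hvs⟩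
      · exact Finset.mem_filter.2 ⟨ht, hut, hvt⟩
  rw [hfeq, Finset.card_insert_of_notMem (by simp [Ne.symm hts]), Finset.card_singleton]

lemma corner_vert (c : ℝ) (hc : c = 0 ∨ c = 1) : bpt c ∈ T.verts := by
  classical
  have hbs : bpt c ∈ stdSimplex ℝ (Fin 3) := by
    constructor
    · intro i
      fin_cases i
      · show (0:ℝ) ≤ 1 - c; rcases hc with rfl | rfl <;> norm_num
      · show (0:ℝ) ≤ c; rcases hc with rfl | rfl <;> norm_num
      · exact le_refl 0
    · rw [Fin.sum_univ_three, bpt_apply0, bpt_apply1, bpt_apply2]; ring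
  rw [← T.covers] at hbs
  obtain ⟨t, ht, hbt⟩ := Set.mem_iUnion₂.1 hbs
  -- bpt c is an extreme point of the simplex hence a vertex of t; we argue via coefficients
  rw [Finset.mem_convexHull'] at hbt
  obtain ⟨g, hg0, hg1, hg2⟩ := hbt
  -- some vertex with positive weight must equal bpt c
  have hex : ∃ y ∈ t, 0 < g y ∧ y = bpt c := by
    by_contra hcon
    push_neg at hcon
    -- consider the coordinate k where bpt c is 1
    rcases hc with rfl | rfl
    · -- bpt 0 = e₀ ; coordinate 0 equals 1
      have h1 : ∑ y ∈ t, g y * y 0 = 1 := by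
        have := congrFun hg2 0
        simp only [Finset.sum_apply, Pi.smul_apply, smul_eq_mul] at this
        rw [this, bpt_apply0]; norm_num
      have hlt : ∀ y ∈ t, g y * y 0 ≤ g y * 1 := by
        intro y hy
        apply mul_le_mul_of_nonneg_left _ (hg0 y hy)
        have hy1 := vert_sum ht hy
        rw [Fin.sum_univ_three] at hy1
        linarith [vert_nonneg ht hy 1, vert_nonneg ht hy 2]
      -- strictness: no y with g y > 0 has y = bpt 0, so y 0 < 1 whenever g y > 0... 
      -- instead: each y with g y > 0 must satisfy y 0 = 1, forcing y = bpt 0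
      have hsum_le : ∑ y ∈ t, g y * y 0 ≤ ∑ y ∈ t, g y * 1 := Finset.sum_le_sum hlt
      simp only [mul_one] at hsum_le
      rw [hg1] at hsum_le
      have heq : ∀ y ∈ t, g y * y 0 = g y * 1 := by
        apply Finset.sum_eq_sum_iff_of_le hlt |>.1
        rw [h1]
        simp only [mul_one]
        rw [hg1]
      -- choose y with g y > 0
      have hpos : ∃ y ∈ t, 0 < g y := by
        by_contra hc2
        push_neg at hc2
        have : ∑ y ∈ t, g y = 0 := Finset.sum_eq_zero (fun y hy => le_antisymm (hc2 y hy) (hg0 y hy))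
        rw [hg1] at this
        norm_num at this
      obtain ⟨y, hyt, hgy⟩ := hpos
      have hy0 : y 0 = 1 := by
        have := heq y hyt
        rw [mul_one] at this
        exact mul_left_cancel₀ (ne_of_gt hgy) (by rw [this, mul_one])
      have hyb : y = bpt 0 := by
        have hys := vert_sum ht hyt
        rw [Fin.sum_univ_three] at hys
        have h1' := vert_nonneg ht hyt 1
        have h2' := vert_nonneg ht hyt 2
        funext i
        fin_cases i
        · show y 0 = 1 - 0; rw [hy0]; norm_num
        · show y 1 = (0:ℝ); linarith
        · show y 2 = (0:ℝ); linarith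
      exact hcon y hyt hgy hyb
    · -- bpt 1 = e₁ ; coordinate 1 equals 1
      have h1 : ∑ y ∈ t, g y * y 1 = 1 := by
        have := congrFun hg2 1
        simp only [Finset.sum_apply, Pi.smul_apply, smul_eq_mul] at this
        rw [this, bpt_apply1]
      have hlt : ∀ y ∈ t, g y * y 1 ≤ g y * 1 := by
        intro y hy
        apply mul_le_mul_of_nonneg_left _ (hg0 y hy)
        exact coord1_le_one (vert_mem_simplex ht hy)
      have heq : ∀ y ∈ t, g y * y 1 = g y * 1 := by
        apply Finset.sum_eq_sum_iff_of_le hlt |>.1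
        rw [h1]
        simp only [mul_one]
        rw [hg1]
      have hpos : ∃ y ∈ t, 0 < g y := by
        by_contra hc2
        push_neg at hc2
        have : ∑ y ∈ t, g y = 0 := Finset.sum_eq_zero (fun y hy => le_antisymm (hc2 y hy) (hg0 y hy))
        rw [hg1] at this
        norm_num at this
      obtain ⟨y, hyt, hgy⟩ := hpos
      have hy1 : y 1 = 1 := by
        have := heq y hyt
        rw [mul_one] at this
        exact mul_left_cancel₀ (ne_of_gt hgy) (by rw [this, mul_one])
      have hyb : y = bpt 1 := by
        have hys := vert_sum ht hyt
        rw [Fin.sum_univ_three] at hys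
        have h0' := vert_nonneg ht hyt 0
        have h2' := vert_nonneg ht hyt 2
        funext i
        fin_cases i
        · show y 0 = 1 - 1; linarith
        · exact hy1
        · show y 2 = (0:ℝ); linarith
      exact hcon y hyt hgy hyb
  obtain ⟨y, hyt, _, hyb⟩ := hex
  rw [← hyb]
  exact subset_verts ht hyt

end Sperner



/-- 1-D Sperner counting: a family of intervals tiling `[t,1]` (given via a half-open
covering property), the number of label-changing intervals is odd iff labels at ends differ. -/
lemma fin3_pigeon : ∀ a b c : Fin 3, a ≠ 2 → b ≠ 2 → c ≠ 2 → a ≠ b → b ≠ c → a = c := by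
  intro a b c
  fin_cases a <;> fin_cases b <;> fin_cases c <;> simp_all

lemma oneD_core (g : ℝ → Fin 3) (hg1 : g 1 ≠ 2) :
    ∀ (n : ℕ) (S : Finset (ℝ × ℝ)) (t : ℝ), S.card = n → t ≤ 1 → g t ≠ 2 →
    (∀ p ∈ S, g p.2 ≠ 2) →
    (∀ p ∈ S, t ≤ p.1 ∧ p.1 < p.2 ∧ p.2 ≤ 1) →
    (∀ p ∈ S, ∀ q ∈ S, p ≠ q → q.2 ≤ p.1 ∨ p.2 ≤ q.1) →
    (∀ c, t < c → c ≤ 1 → ∃ p ∈ S, p.1 < c ∧ c ≤ p.2) →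
    (S.filter (fun p => g p.1 ≠ g p.2)).card % 2 = (if g t ≠ g 1 then 1 else 0) := by
  intro n
  induction n with
  | zero =>
    intro S t hcard ht1 _ _ _ _ hcover
    have hS : S = ∅ := Finset.card_eq_zero.1 hcard
    subst hS
    rcases ht1.lt_or_eq with hlt | heq
    · obtain ⟨p, hp, _⟩ := hcover 1 hlt le_rfl
      exact absurd hp (Finset.notMem_empty p)
    · subst heq
      simp
  | succ n ih =>
    intro S t hcard ht1 hgt hgS hbounds hdisj hcover
    have hSne : S.Nonempty := by
      rw [← Finset.card_pos, hcard]; omega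
    have ht1' : t < 1 := by
      rcases ht1.lt_or_eq with h | h
      · exact h
      · exfalso
        obtain ⟨p, hp⟩ := hSne
        obtain ⟨h1, h2, h3⟩ := hbounds p hp
        subst h
        linarith
    set E : Finset ℝ := (S.image Prod.fst ∪ S.image Prod.snd).filter (fun x => t < x) with hE
    have hEne : E.Nonempty := by
      obtain ⟨p, hp⟩ := hSne
      exact ⟨p.2, by
        rw [hE, Finset.mem_filter]
        refine ⟨Finset.mem_union_right _ (Finset.mem_image_of_mem _ hp), ?_⟩
        obtain ⟨h1, h2, _⟩ := hbounds p hp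
        linarith⟩
    set c : ℝ := E.min' hEne with hc
    have hcE : c ∈ E := Finset.min'_mem E hEne
    have htc : t < c := (Finset.mem_filter.1 hcE).2
    have hc1 : c ≤ 1 := by
      rcases Finset.mem_union.1 (Finset.mem_filter.1 hcE).1 with h | h
      · obtain ⟨p, hp, hpe⟩ := Finset.mem_image.1 h
        obtain ⟨_, h2, h3⟩ := hbounds p hp
        rw [← hpe] at *
        linarith
      · obtain ⟨p, hp, hpe⟩ := Finset.mem_image.1 h
        obtain ⟨_, _, h3⟩ := hbounds p hp
        rw [← hpe]
        exact h3
    obtain ⟨p, hpS, hp1c, hcp2⟩ := hcover c htc hc1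
    have hp1t : p.1 = t := by
      rcases (hbounds p hpS).1.lt_or_eq with h | h
      · exfalso
        have : p.1 ∈ E := by
          rw [hE, Finset.mem_filter]
          exact ⟨Finset.mem_union_left _ (Finset.mem_image_of_mem _ hpS), h⟩
        have := Finset.min'_le E p.1 this
        rw [← hc] at this
        linarith
      · exact h.symm
    set S' : Finset (ℝ × ℝ) := S.erase p with hS'
    have hcard' : S'.card = n := by
      rw [hS', Finset.card_erase_of_mem hpS, hcard]
      omega
    have hb1 : p.2 ≤ 1 := (hbounds p hpS).2.2
    have hbounds' : ∀ q ∈ S', p.2 ≤ q.1 ∧ q.1 < q.2 ∧ q.2 ≤ 1 := by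
      intro q hq
      rw [hS', Finset.mem_erase] at hq
      obtain ⟨hqp, hqS⟩ := hq
      obtain ⟨hq1, hq2, hq3⟩ := hbounds q hqS
      refine ⟨?_, hq2, hq3⟩
      rcases hdisj q hqS p hpS hqp with h | h
      · exact h
      · exfalso
        rw [hp1t] at h
        linarith
    have hdisj' : ∀ x ∈ S', ∀ y ∈ S', x ≠ y → y.2 ≤ x.1 ∨ x.2 ≤ y.1 := by
      intro x hx y hy hxy
      exact hdisj x (Finset.mem_of_mem_erase hx) y (Finset.mem_of_mem_erase hy) hxy
    have hcover' : ∀ x, p.2 < x → x ≤ 1 → ∃ q ∈ S', q.1 < x ∧ x ≤ q.2 := by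
      intro x hx hx1
      have htx : t < x := by
        have := (hbounds p hpS).2.1
        rw [hp1t] at this
        linarith
      obtain ⟨q, hqS, hq1, hq2⟩ := hcover x htx hx1
      refine ⟨q, ?_, hq1, hq2⟩
      rw [hS', Finset.mem_erase]
      refine ⟨?_, hqS⟩
      intro heq
      rw [heq] at hq2
      linarith
    have hgS' : ∀ q ∈ S', g q.2 ≠ 2 := fun q hq => hgS q (Finset.mem_of_mem_erase hq)
    have hIH := ih S' p.2 hcard' hb1 (hgS p hpS) hgS' hbounds' hdisj' hcover'
    have hfilter : (S.filter (fun q => g q.1 ≠ g q.2)) =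
        if g p.1 ≠ g p.2 then insert p (S'.filter (fun q => g q.1 ≠ g q.2))
        else S'.filter (fun q => g q.1 ≠ g q.2) := by
      rw [hS']
      by_cases hgp : g p.1 ≠ g p.2
      · rw [if_pos hgp]
        ext q
        simp only [Finset.mem_filter, Finset.mem_insert, Finset.mem_erase]
        constructor
        · rintro ⟨hqS, hgq⟩
          by_cases hqp : q = p
          · exact Or.inl hqp
          · exact Or.inr ⟨⟨hqp, hqS⟩, hgq⟩
        · rintro (rfl | ⟨⟨_, hqS⟩, hgq⟩)
          · exact ⟨hpS, hgp⟩
          · exact ⟨hqS, hgq⟩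
      · rw [if_neg hgp]
        ext q
        simp only [Finset.mem_filter, Finset.mem_erase]
        constructor
        · rintro ⟨hqS, hgq⟩
          refine ⟨⟨?_, hqS⟩, hgq⟩
          rintro rfl
          exact hgp hgq
        · rintro ⟨⟨_, hqS⟩, hgq⟩
          exact ⟨hqS, hgq⟩
    have hnotmem : p ∉ S'.filter (fun q => g q.1 ≠ g q.2) := by
      rw [hS']
      simp [Finset.mem_filter]
    rw [hfilter, hp1t]
    by_cases h1 : g t = g p.2
    · rw [if_neg (by simpa using h1), hIH]
      rw [h1]
    · rw [if_pos h1, Finset.card_insert_of_notMem hnotmem]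
      by_cases h2 : g p.2 = g 1
      · have hne : g t ≠ g 1 := fun h => h1 (h.trans h2.symm)
        rw [if_pos hne]
        rw [if_neg (by simp [h2])] at hIH
        omega
      · have heq : g t = g 1 := fin3_pigeon _ _ _ hgt (hgS p hpS) hg1 h1 h2
        rw [if_neg (by simp [heq])]
        rw [if_pos (by simpa using h2)] at hIH
        omega

lemma halfopen_cover {S : Finset (ℝ × ℝ)} {W : Finset ℝ}
    (hend : ∀ p ∈ S, p.1 ∈ W ∧ p.2 ∈ W)
    (hpt : ∀ c : ℝ, 0 ≤ c → c ≤ 1 → c ∉ W → ∃ p ∈ S, p.1 ≤ c ∧ c ≤ p.2) :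
    ∀ c : ℝ, 0 < c → c ≤ 1 → ∃ p ∈ S, p.1 < c ∧ c ≤ p.2 := by
  intro c hc0 hc1
  set F : Finset ℝ := insert 0 (W.filter (fun x => 0 ≤ x ∧ x < c)) with hF
  have hFne : F.Nonempty := ⟨0, by rw [hF]; exact Finset.mem_insert_self 0 _⟩
  set e : ℝ := F.max' hFne with he
  have he0 : 0 ≤ e := Finset.le_max' F 0 (by rw [hF]; exact Finset.mem_insert_self 0 _)
  have hec : e < c := by
    have := Finset.max'_mem F hFne
    rw [← he, hF] at this
    rcases Finset.mem_insert.1 this with h | h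
    · rw [h]; exact hc0
    · exact (Finset.mem_filter.1 h).2.2
  set c' : ℝ := (e + c) / 2 with hc'
  have hc'0 : 0 ≤ c' := by rw [hc']; linarith
  have hc'c : c' < c := by rw [hc']; linarith
  have hec' : e < c' := by rw [hc']; linarith
  have hc'1 : c' ≤ 1 := by linarith
  have hc'W : c' ∉ W := by
    intro hmem
    have : c' ∈ F := by
      rw [hF]
      exact Finset.mem_insert_of_mem (Finset.mem_filter.2 ⟨hmem, hc'0, hc'c⟩)
    have := Finset.le_max' F c' this
    rw [← he] at this
    linarith
  obtain ⟨p, hpS, hp1, hp2⟩ := hpt c' hc'0 hc'1 hc'W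
  refine ⟨p, hpS, by linarith, ?_⟩
  by_contra hcon
  push_neg at hcon
  have hp2W : p.2 ∈ W := (hend p hpS).2
  have : p.2 ∈ F := by
    rw [hF]
    exact Finset.mem_insert_of_mem (Finset.mem_filter.2 ⟨hp2W, by linarith, hcon⟩)
  have := Finset.le_max' F p.2 this
  rw [← he] at this
  linarith

lemma left_endpoint_zero {S : Finset (ℝ × ℝ)}
    (hbounds : ∀ p ∈ S, 0 ≤ p.1 ∧ p.1 < p.2 ∧ p.2 ≤ 1)
    (hcover : ∀ c : ℝ, 0 < c → c ≤ 1 → ∃ p ∈ S, p.1 < c ∧ c ≤ p.2) :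
    ∃ p ∈ S, p.1 = 0 := by
  obtain ⟨p₀, hp₀S, _, hp₀2⟩ := hcover 1 one_pos le_rfl
  set E : Finset ℝ := (S.image Prod.fst ∪ S.image Prod.snd).filter (fun x => 0 < x) with hE
  have hEne : E.Nonempty := by
    refine ⟨p₀.2, ?_⟩
    rw [hE, Finset.mem_filter]
    exact ⟨Finset.mem_union_right _ (Finset.mem_image_of_mem _ hp₀S), by linarith⟩
  set c : ℝ := E.min' hEne with hc
  have hcE : c ∈ E := Finset.min'_mem E hEne
  have hc0 : 0 < c := (Finset.mem_filter.1 hcE).2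
  have hc1 : c ≤ 1 := by
    rcases Finset.mem_union.1 (Finset.mem_filter.1 hcE).1 with h | h <;>
    · obtain ⟨p, hp, hpe⟩ := Finset.mem_image.1 h
      obtain ⟨h1, h2, h3⟩ := hbounds p hp
      rw [← hpe]
      linarith
  obtain ⟨p, hpS, hp1, _⟩ := hcover c hc0 hc1
  refine ⟨p, hpS, ?_⟩
  rcases (hbounds p hpS).1.lt_or_eq with h | h
  · exfalso
    have : p.1 ∈ E := by
      rw [hE, Finset.mem_filter]
      exact ⟨Finset.mem_union_left _ (Finset.mem_image_of_mem _ hpS), h⟩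
    have := Finset.min'_le E p.1 this
    rw [← hc] at this
    linarith
  · exact h.symm
section Assembly
open Sperner

lemma door_parity : ∀ x y z : Fin 3, ({x, y, z} : Finset (Fin 3)) ≠ Finset.univ →
    (((if x = 0 ∧ x = 1 then 1 else 0) + (if x = 0 ∧ y = 1 then 1 else 0)
        + (if x = 0 ∧ z = 1 then 1 else 0)) +
     ((if y = 0 ∧ x = 1 then 1 else 0) + (if y = 0 ∧ y = 1 then 1 else 0)
        + (if y = 0 ∧ z = 1 then 1 else 0)) +
     ((if z = 0 ∧ x = 1 then 1 else 0) + (if z = 0 ∧ y = 1 then 1 else 0)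
        + (if z = 0 ∧ z = 1 then 1 else 0)) : ℕ) % 2 = 0 := by
  decide

lemma fin3_cases : ∀ x : Fin 3, x ≠ 2 → x = 0 ∨ x = 1 := by decide

/-- Two-dimensional Sperner lemma: some small triangle carries all three labels. -/
theorem sperner_two_dim (T : Triangulation 2) (L : (Fin 3 → ℝ) → Fin 3)
    (hL : IsSpernerLabelling T L) :
    ∃ s ∈ T.cells, s.image L = (Finset.univ : Finset (Fin 3)) := by
  by_contra hno
  push_neg at hno
  set D : Finset (V3 × V3) := (T.verts ×ˢ T.verts).filter
    (fun p => L p.1 = 0 ∧ L p.2 = 1 ∧ ∃ s ∈ T.cells, p.1 ∈ s ∧ p.2 ∈ s) with hD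
  have hDmem : ∀ p ∈ D, p.1 ∈ T.verts ∧ p.2 ∈ T.verts ∧ L p.1 = 0 ∧ L p.2 = 1 ∧
      ∃ s ∈ T.cells, p.1 ∈ s ∧ p.2 ∈ s := by
    intro p hp
    rw [hD, Finset.mem_filter, Finset.mem_product] at hp
    exact ⟨hp.1.1, hp.1.2, hp.2⟩
  -- Step 1 : double counting
  have hstep1 : ∑ s ∈ T.cells, ((s ×ˢ s).filter (fun p : V3 × V3 => L p.1 = 0 ∧ L p.2 = 1)).card
      = ∑ p ∈ D, (T.cells.filter (fun t => p.1 ∈ t ∧ p.2 ∈ t)).card := by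
    have h1 : ∀ s ∈ T.cells, ((s ×ˢ s).filter (fun p : V3 × V3 => L p.1 = 0 ∧ L p.2 = 1))
        = (D.filter (fun p => p.1 ∈ s ∧ p.2 ∈ s)) := by
      intro s hs
      ext p
      simp only [Finset.mem_filter, Finset.mem_product, hD]
      constructor
      · rintro ⟨⟨h1, h2⟩, h3, h4⟩
        exact ⟨⟨⟨subset_verts hs h1, subset_verts hs h2⟩, h3, h4, s, hs, h1, h2⟩, h1, h2⟩
      · rintro ⟨⟨_, h3, h4, _⟩, h5, h6⟩
        exact ⟨⟨h5, h6⟩, h3, h4⟩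
    calc ∑ s ∈ T.cells, ((s ×ˢ s).filter (fun p : V3 × V3 => L p.1 = 0 ∧ L p.2 = 1)).card
        = ∑ s ∈ T.cells, ∑ p ∈ D, (if p.1 ∈ s ∧ p.2 ∈ s then 1 else 0) := by
          refine Finset.sum_congr rfl fun s hs => ?_
          rw [h1 s hs, Finset.card_filter]
      _ = ∑ p ∈ D, ∑ s ∈ T.cells, (if p.1 ∈ s ∧ p.2 ∈ s then 1 else 0) := Finset.sum_comm
      _ = ∑ p ∈ D, (T.cells.filter (fun t => p.1 ∈ t ∧ p.2 ∈ t)).card := by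
          refine Finset.sum_congr rfl fun p _ => ?_
          rw [Finset.card_filter]
  -- Step 2 : each cell contributes an even count
  have hleft : (∑ s ∈ T.cells,
      ((s ×ˢ s).filter (fun p : V3 × V3 => L p.1 = 0 ∧ L p.2 = 1)).card) % 2 = 0 := by
    rw [Finset.sum_nat_mod]
    have heach : ∀ s ∈ T.cells,
        ((s ×ˢ s).filter (fun p : V3 × V3 => L p.1 = 0 ∧ L p.2 = 1)).card % 2 = 0 := by
      intro s hs
      obtain ⟨a, b, c, hab, hac, hbc, hseq⟩ := Finset.card_eq_three.1 (T.card_cells s hs)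
      have hcount : ((s ×ˢ s).filter (fun p : V3 × V3 => L p.1 = 0 ∧ L p.2 = 1)).card
          = (((if L a = 0 ∧ L a = 1 then 1 else 0) + (if L a = 0 ∧ L b = 1 then 1 else 0)
              + (if L a = 0 ∧ L c = 1 then 1 else 0)) +
             ((if L b = 0 ∧ L a = 1 then 1 else 0) + (if L b = 0 ∧ L b = 1 then 1 else 0)
              + (if L b = 0 ∧ L c = 1 then 1 else 0)) +
             ((if L c = 0 ∧ L a = 1 then 1 else 0) + (if L c = 0 ∧ L b = 1 then 1 else 0)
              + (if L c = 0 ∧ L c = 1 then 1 else 0))) := by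
        rw [Finset.card_filter, Finset.sum_product, hseq]
        rw [sum3 hab hac hbc
          (f := fun x => ∑ y ∈ ({a, b, c} : Finset V3), if L x = 0 ∧ L y = 1 then 1 else 0)]
        rw [sum3 hab hac hbc (f := fun y => if L a = 0 ∧ L y = 1 then 1 else 0),
          sum3 hab hac hbc (f := fun y => if L b = 0 ∧ L y = 1 then 1 else 0),
          sum3 hab hac hbc (f := fun y => if L c = 0 ∧ L y = 1 then 1 else 0)]
      rw [hcount]
      have himg : ({L a, L b, L c} : Finset (Fin 3)) ≠ Finset.univ := by
        have := hno s hs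
        rw [hseq] at this
        simpa [Finset.image_insert, Finset.image_singleton] using this
      exact door_parity (L a) (L b) (L c) himg
    rw [Finset.sum_congr rfl heach]
    simp
  -- Step 3 : multiplicities
  have hmult : ∀ p ∈ D, (T.cells.filter (fun t => p.1 ∈ t ∧ p.2 ∈ t)).card
      = if p.1 2 = 0 ∧ p.2 2 = 0 then 1 else 2 := by
    intro p hp
    obtain ⟨hv1, hv2, hL1, hL2, s, hs, h1s, h2s⟩ := hDmem p hp
    have hne : p.1 ≠ p.2 := by
      intro h
      rw [h, hL2] at hL1
      exact absurd hL1 (by decide)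
    by_cases hb : p.1 2 = 0 ∧ p.2 2 = 0
    · rw [if_pos hb]
      exact mult_bottom hs h1s h2s hne hb.1 hb.2
    · rw [if_neg hb]
      apply mult_interior hs h1s h2s hne
      have hpos1 : 0 < p.1 0 := by
        have := hL p.1 hv1
        rwa [hL1] at this
      have hpos2 : 0 < p.2 1 := by
        have := hL p.2 hv2
        rwa [hL2] at this
      have hn1 := (mem_verts_simplex hv1).1
      have hn2 := (mem_verts_simplex hv2).1
      intro i
      fin_cases i
      · show 0 < p.1 0 + p.2 0
        have := hn2 0; linarith
      · show 0 < p.1 1 + p.2 1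
        have := hn1 1; linarith
      · show 0 < p.1 2 + p.2 2
        have h1' := hn1 2
        have h2' := hn2 2
        rcases h1'.lt_or_eq with h | h
        · linarith
        · rcases h2'.lt_or_eq with h2 | h2
          · linarith
          · exact absurd ⟨h.symm, h2.symm⟩ hb
  -- Step 4 : reduce to the bottom doors
  set Dbot : Finset (V3 × V3) := D.filter (fun p => p.1 2 = 0 ∧ p.2 2 = 0) with hDbot
  have hstep4 : (∑ p ∈ D, (T.cells.filter (fun t => p.1 ∈ t ∧ p.2 ∈ t)).card) % 2
      = Dbot.card % 2 := by
    rw [Finset.sum_congr rfl hmult]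
    rw [← Finset.sum_filter_add_sum_filter_not D (fun p => p.1 2 = 0 ∧ p.2 2 = 0)]
    have hx1 : ∑ p ∈ D.filter (fun p => p.1 2 = 0 ∧ p.2 2 = 0),
        (if p.1 2 = 0 ∧ p.2 2 = 0 then 1 else 2) = Dbot.card := by
      rw [Finset.sum_congr rfl (fun p hp => by
        rw [if_pos (Finset.mem_filter.1 hp).2])]
      simp [hDbot]
    have hx2 : ∑ p ∈ D.filter (fun p => ¬(p.1 2 = 0 ∧ p.2 2 = 0)),
        (if p.1 2 = 0 ∧ p.2 2 = 0 then 1 else 2)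
        = 2 * (D.filter (fun p => ¬(p.1 2 = 0 ∧ p.2 2 = 0))).card := by
      rw [Finset.sum_congr rfl (fun p hp => by
        rw [if_neg (Finset.mem_filter.1 hp).2])]
      rw [Finset.sum_const, smul_eq_mul, mul_comm]
    rw [hx1, hx2]
    omega
  -- Step 5 : the bijection with labelled bottom segments
  set lab : ℝ → Fin 3 := fun c => L (bpt c) with hlab
  set BSf : Finset (ℝ × ℝ) := (BS T).filter (fun q => lab q.1 ≠ lab q.2) with hBSf
  have hvert_bpt : ∀ v ∈ T.verts, v 2 = 0 → v = bpt (v 1) := by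
    intro v hv h2
    exact bottom_eq_bpt (mem_verts_simplex hv).2 h2
  have hbij : Dbot.card = BSf.card := by
    apply Finset.card_bij (fun p _ => if p.1 1 < p.2 1 then (p.1 1, p.2 1) else (p.2 1, p.1 1))
    · -- maps into BSf
      intro p hp
      rw [hDbot, Finset.mem_filter] at hp
      obtain ⟨hpD, hb1, hb2⟩ := hp
      obtain ⟨hv1, hv2, hL1, hL2, s, hs, h1s, h2s⟩ := hDmem p hpD
      have he1 : p.1 = bpt (p.1 1) := hvert_bpt _ hv1 hb1
      have he2 : p.2 = bpt (p.2 1) := hvert_bpt _ hv2 hb2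
      have hlab1 : lab (p.1 1) = 0 := by rw [hlab]; simp only; rw [← he1]; exact hL1
      have hlab2 : lab (p.2 1) = 1 := by rw [hlab]; simp only; rw [← he2]; exact hL2
      have hne12 : p.1 1 ≠ p.2 1 := by
        intro h
        have : p.1 = p.2 := by rw [he1, he2, h]
        rw [this, hL2] at hL1
        exact absurd hL1 (by decide)
      by_cases hlt : p.1 1 < p.2 1
      · rw [if_pos hlt, hBSf, Finset.mem_filter]
        constructor
        · exact mem_BS_iff.2 ⟨p.1, p.2, hv1, hv2, hb1, hb2, hlt, ⟨s, hs, h1s, h2s⟩, rfl⟩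
        · show lab (p.1 1) ≠ lab (p.2 1)
          rw [hlab1, hlab2]
          decide
      · rw [if_neg hlt, hBSf, Finset.mem_filter]
        have hgt : p.2 1 < p.1 1 := lt_of_le_of_ne (not_lt.1 hlt) (Ne.symm hne12)
        constructor
        · exact mem_BS_iff.2 ⟨p.2, p.1, hv2, hv1, hb2, hb1, hgt, ⟨s, hs, h2s, h1s⟩, rfl⟩
        · show lab (p.2 1) ≠ lab (p.1 1)
          rw [hlab1, hlab2]
          decide
    · -- injective
      intro p hp q hq heq
      rw [hDbot, Finset.mem_filter] at hp hq
      obtain ⟨hpD, hpb1, hpb2⟩ := hp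
      obtain ⟨hqD, hqb1, hqb2⟩ := hq
      obtain ⟨hpv1, hpv2, hpL1, hpL2, _⟩ := hDmem p hpD
      obtain ⟨hqv1, hqv2, hqL1, hqL2, _⟩ := hDmem q hqD
      have hep1 : p.1 = bpt (p.1 1) := hvert_bpt _ hpv1 hpb1
      have hep2 : p.2 = bpt (p.2 1) := hvert_bpt _ hpv2 hpb2
      have heq1 : q.1 = bpt (q.1 1) := hvert_bpt _ hqv1 hqb1
      have heq2 : q.2 = bpt (q.2 1) := hvert_bpt _ hqv2 hqb2
      have hcross1 : p.1 1 = q.2 1 → False := by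
        intro h
        have : p.1 = q.2 := by rw [hep1, heq2, h]
        rw [this, hqL2] at hpL1
        exact absurd hpL1 (by decide)
      have hcross2 : p.2 1 = q.1 1 → False := by
        intro h
        have : p.2 = q.1 := by rw [hep2, heq1, h]
        rw [this, hqL1] at hpL2
        exact absurd hpL2 (by decide)
      have hmain : p.1 1 = q.1 1 ∧ p.2 1 = q.2 1 := by
        by_cases h1 : p.1 1 < p.2 1 <;> by_cases h2 : q.1 1 < q.2 1
        · rw [if_pos h1, if_pos h2] at heq
          exact ⟨congrArg Prod.fst heq, congrArg Prod.snd heq⟩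
        · rw [if_pos h1, if_neg h2] at heq
          exact absurd (congrArg Prod.fst heq) (fun h => hcross1 h)
        · rw [if_neg h1, if_pos h2] at heq
          exact absurd (congrArg Prod.snd heq) (fun h => hcross1 h)
        · rw [if_neg h1, if_neg h2] at heq
          exact ⟨congrArg Prod.snd heq, congrArg Prod.fst heq⟩
      have : p.1 = q.1 := by rw [hep1, heq1, hmain.1]
      have h22 : p.2 = q.2 := by rw [hep2, heq2, hmain.2]
      exact Prod.ext this h22
    · -- surjective
      intro q hq
      rw [hBSf, Finset.mem_filter] at hq
      obtain ⟨hqBS, hqlab⟩ := hq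
      obtain ⟨a, b, haV, hbV, ha2, hb2, hab1, ⟨s, hs, has, hbs⟩, hqe⟩ := mem_BS_iff.1 hqBS
      have hea : a = bpt (a 1) := hvert_bpt _ haV ha2
      have heb : b = bpt (b 1) := hvert_bpt _ hbV hb2
      have hLa2 : L a ≠ 2 := by
        intro h
        have := hL a haV
        rw [h] at this
        rw [ha2] at this
        exact absurd this (by norm_num)
      have hLb2 : L b ≠ 2 := by
        intro h
        have := hL b hbV
        rw [h] at this
        rw [hb2] at this
        exact absurd this (by norm_num)
      have hlabne : L a ≠ L b := by
        have : lab (a 1) ≠ lab (b 1) := by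
          rw [hqe] at hqlab
          exact hqlab
        rw [hlab] at this
        simp only at this
        rw [← hea, ← heb] at this
        exact this
      rcases fin3_cases (L a) hLa2 with hA | hA
      · have hB : L b = 1 := by
          rcases fin3_cases (L b) hLb2 with hB | hB
          · rw [hA, hB] at hlabne; exact absurd rfl hlabne
          · exact hB
        refine ⟨(a, b), ?_, ?_⟩
        · rw [hDbot, Finset.mem_filter]
          refine ⟨?_, ha2, hb2⟩
          rw [hD, Finset.mem_filter, Finset.mem_product]
          exact ⟨⟨haV, hbV⟩, hA, hB, s, hs, has, hbs⟩
        · show (if a 1 < b 1 then (a 1, b 1) else (b 1, a 1)) = q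
          rw [if_pos hab1, hqe]
      · have hB : L b = 0 := by
          rcases fin3_cases (L b) hLb2 with hB | hB
          · exact hB
          · rw [hA, hB] at hlabne; exact absurd rfl hlabne
        refine ⟨(b, a), ?_, ?_⟩
        · rw [hDbot, Finset.mem_filter]
          refine ⟨?_, hb2, ha2⟩
          rw [hD, Finset.mem_filter, Finset.mem_product]
          exact ⟨⟨hbV, haV⟩, hB, hA, s, hs, hbs, has⟩
        · show (if b 1 < a 1 then (b 1, a 1) else (a 1, b 1)) = q
          rw [if_neg (by push_neg; linarith), hqe]
  -- Step 6 : the bottom count is odd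
  have hval0 : ∀ j : Fin 3, 0 < bpt 0 j → j = 0 := by
    intro j hj
    fin_cases j
    · rfl
    · exfalso; revert hj; show ¬(0 < bpt 0 1); rw [bpt_apply1]; norm_num
    · exfalso; revert hj; show ¬(0 < bpt 0 2); rw [bpt_apply2]; norm_num
  have hval1 : ∀ j : Fin 3, 0 < bpt 1 j → j = 1 := by
    intro j hj
    fin_cases j
    · exfalso; revert hj; show ¬(0 < bpt 1 0); rw [bpt_apply0]; norm_num
    · rfl
    · exfalso; revert hj; show ¬(0 < bpt 1 2); rw [bpt_apply2]; norm_num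
  have hcorner0 : lab 0 = 0 := by
    have hv := corner_vert (T := T) 0 (Or.inl rfl)
    have hpos := hL _ hv
    exact hval0 _ hpos
  have hcorner1 : lab 1 = 1 := by
    have hv := corner_vert (T := T) 1 (Or.inr rfl)
    have hpos := hL _ hv
    exact hval1 _ hpos
  have hg1 : lab 1 ≠ 2 := by rw [hcorner1]; decide
  have hg0 : lab 0 ≠ 2 := by rw [hcorner0]; decide
  have hgS : ∀ p ∈ BS T, lab p.2 ≠ 2 := by
    intro p hp
    obtain ⟨a, b, haV, hbV, ha2, hb2, _, _, hpe⟩ := mem_BS_iff.1 hp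
    have heb : b = bpt (b 1) := hvert_bpt _ hbV hb2
    have hlb : lab (b 1) = L b := by rw [hlab]; simp only; rw [← heb]
    rw [hpe]
    show lab (b 1) ≠ 2
    rw [hlb]
    intro hcon
    have := hL b hbV
    rw [hcon, hb2] at this
    norm_num at this
  have hcover := halfopen_cover (BS_endpoints (T := T)) (BS_cover (T := T))
  have hodd := oneD_core lab hg1 (BS T).card (BS T) 0 rfl zero_le_one hg0 hgS
    (BS_bounds (T := T)) (BS_disjoint (T := T)) hcover
  have hBSfodd : BSf.card % 2 = 1 := by
    rw [hBSf, hodd, hcorner0, hcorner1, if_pos (by decide)]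
  rw [hstep1] at hleft
  rw [hstep4] at hleft
  rw [hbij, hBSfodd] at hleft
  exact absurd hleft one_ne_zero

end Assembly
end

section
/- Sperner's lemma implies the Knaster–Kuratowski–Mazurkiewicz lemma: if C_1, ..., C_{n+1} are closed subsets of the standard n-simplex such that every face spanned by vertices {v_i : i ∈ I} is contained in ∪_{i∈I} C_i, then ∩_{i=1}^{n+1} C_i is nonempty. -/
namespace KKMproof

noncomputable def Y (n k : ℕ) (y : Fin n → ℝ) : ℕ → ℝ := fun j =>
  if h0 : j = 0 then 0 else if h : j ≤ n then y ⟨j - 1, by omega⟩ else (k : ℝ)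

noncomputable def phiFun (n k : ℕ) (y : Fin n → ℝ) : Fin (n + 1) → ℝ := fun i =>
  (Y n k y (i + 1) - Y n k y i) / k

/-- The order region `0 ≤ y 0 ≤ y 1 ≤ ... ≤ k`. -/
def Sk (n k : ℕ) : Set (Fin n → ℝ) :=
  {y | (∀ i, 0 ≤ y i ∧ y i ≤ k) ∧ ∀ i i' : Fin n, i ≤ i' → y i ≤ y i'}

lemma Y_mono (n k : ℕ) {y : Fin n → ℝ} (hy : y ∈ Sk n k) {j : ℕ} (hj : j ≤ n) :
    Y n k y j ≤ Y n k y (j + 1) := by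
  obtain ⟨h1, h2⟩ := hy
  unfold Y
  rcases eq_or_ne j 0 with h | h
  · subst h
    by_cases hn : 1 ≤ n
    · simp only [hn]
      simp [hn]
      exact (h1 ⟨0, by omega⟩).1
    · have : ¬ (1 ≤ n) := hn
      simp [this]
  · have hj1 : 1 ≤ j := by omega
    by_cases hjn : j + 1 ≤ n
    · have : j ≤ n := by omega
      have hne : j + 1 ≠ 0 := by omega
      simp only [h, dite_false, hjn, this, dite_true, hne]
      exact h2 _ _ (by simp only [Fin.mk_le_mk]; omega)
    · have hjn' : j = n := by omega
      have hne : j + 1 ≠ 0 := by omega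
      simp only [h, dite_false, hj, dite_true, show ¬ (j + 1 ≤ n) by omega, hne]
      exact (h1 _).2

lemma sum_phiFun (n k : ℕ) (hk : k ≠ 0) (y : Fin n → ℝ) :
    ∑ i, phiFun n k y i = 1 := by
  unfold phiFun
  rw [Fin.sum_univ_eq_sum_range (fun j => (Y n k y (j + 1) - Y n k y j) / k),
    ← Finset.sum_div, Finset.sum_range_sub (Y n k y)]
  have h0 : Y n k y 0 = 0 := by simp [Y]
  have h1 : Y n k y (n + 1) = k := by simp [Y]
  rw [h0, h1, sub_zero, div_self (by exact_mod_cast hk)]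

lemma phi_mem_stdSimplex (n k : ℕ) (hk : k ≠ 0) {y : Fin n → ℝ} (hy : y ∈ Sk n k) :
    phiFun n k y ∈ stdSimplex ℝ (Fin (n + 1)) := by
  constructor
  · intro i
    have := Y_mono n k hy (j := i) (by omega)
    unfold phiFun
    have hk' : (0:ℝ) < k := by positivity
    have := Y_mono n k hy (j := (i:ℕ)) (by omega)
    apply div_nonneg (by linarith) hk'.le
  · exact sum_phiFun n k hk y


lemma Y_succ (n k : ℕ) (hk : k ≠ 0) (y : Fin n → ℝ) (j : ℕ) (hj : j < n + 1) :
    Y n k y (j + 1) = Y n k y j + k * phiFun n k y ⟨j, hj⟩ := by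
  have hk' : (k : ℝ) ≠ 0 := by exact_mod_cast hk
  unfold phiFun
  field_simp
  ring

lemma phiFun_injective (n k : ℕ) (hk : k ≠ 0) : Function.Injective (phiFun n k) := by
  intro y y' h
  have hY : ∀ j, Y n k y j = Y n k y' j := by
    intro j
    induction j with
    | zero => simp [Y]
    | succ m ih =>
      by_cases hm : m < n + 1
      · rw [Y_succ n k hk y m hm, Y_succ n k hk y' m hm, ih, h]
      · unfold Y; simp [show ¬ (m + 1 ≤ n) by omega, show m + 1 ≠ 0 by omega]
  funext j
  have h2 := hY ((j : ℕ) + 1)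
  unfold Y at h2
  simp only [show (j:ℕ) + 1 ≠ 0 by omega, show (j:ℕ) + 1 ≤ n by omega, dite_true,
    dite_false, Nat.add_sub_cancel] at h2
  simpa using h2

/-- preimage of a simplex point -/
noncomputable def yOf (n k : ℕ) (x : Fin (n + 1) → ℝ) : Fin n → ℝ := fun j =>
  k * ∑ i : Fin (n + 1), (if (i : ℕ) ≤ (j : ℕ) then x i else 0)

lemma Y_yOf (n k : ℕ) {x : Fin (n + 1) → ℝ} (hx : x ∈ stdSimplex ℝ (Fin (n + 1)))
    (j : ℕ) (hj : j ≤ n + 1) :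
    Y n k (yOf n k x) j = k * ∑ i : Fin (n + 1), (if (i : ℕ) < j then x i else 0) := by
  unfold Y yOf
  rcases eq_or_ne j 0 with h | h
  · simp [h]
  · by_cases h2 : j ≤ n
    · simp only [h, dite_false, h2, dite_true]
      congr 1
      apply Finset.sum_congr rfl
      intro i _
      congr 1
      simp only [eq_iff_iff]
      omega
    · have hj' : j = n + 1 := by omega
      simp only [h, dite_false, h2, dite_false]
      have : ∀ i : Fin (n + 1), (if (i : ℕ) < j then x i else 0) = x i := by
        intro i; rw [if_pos (by omega)]
      rw [Finset.sum_congr rfl (fun i _ => this i), hx.2, mul_one]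

lemma phiFun_yOf (n k : ℕ) (hk : k ≠ 0) {x : Fin (n + 1) → ℝ}
    (hx : x ∈ stdSimplex ℝ (Fin (n + 1))) : phiFun n k (yOf n k x) = x := by
  have hk' : (k : ℝ) ≠ 0 := by exact_mod_cast hk
  funext i
  unfold phiFun
  rw [Y_yOf n k hx ((i : ℕ) + 1) (by omega), Y_yOf n k hx i (by omega)]
  have key : (∑ i' : Fin (n + 1), (if (i' : ℕ) < (i : ℕ) + 1 then x i' else 0))
      = (∑ i' : Fin (n + 1), (if (i' : ℕ) < (i : ℕ) then x i' else 0)) + x i := by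
    have h1 : ∀ i' : Fin (n + 1), (if (i' : ℕ) < (i : ℕ) + 1 then x i' else 0)
        = (if (i' : ℕ) < (i : ℕ) then x i' else 0) + (if i' = i then x i' else 0) := by
      intro i'
      by_cases hc : i' = i
      · subst hc; rw [if_pos (by omega), if_neg (by omega), if_pos rfl]; ring
      · have hne : (i' : ℕ) ≠ (i : ℕ) := fun hh => hc (Fin.ext hh)
        rw [if_neg hc, add_zero]
        by_cases hlt : (i' : ℕ) < (i : ℕ)
        · rw [if_pos (by omega), if_pos hlt]
        · rw [if_neg (by omega), if_neg hlt]
    rw [Finset.sum_congr rfl (fun i' _ => h1 i'), Finset.sum_add_distrib]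
    congr 1
    simp
  rw [key]
  field_simp
  ring

lemma yOf_mem_Sk (n k : ℕ) {x : Fin (n + 1) → ℝ}
    (hx : x ∈ stdSimplex ℝ (Fin (n + 1))) : yOf n k x ∈ Sk n k := by
  constructor
  · intro j
    constructor
    · unfold yOf
      apply mul_nonneg (by positivity)
      apply Finset.sum_nonneg
      intro i _
      split
      · exact hx.1 i
      · exact le_rfl
    · unfold yOf
      calc (k : ℝ) * ∑ i : Fin (n + 1), (if (i : ℕ) ≤ (j : ℕ) then x i else 0)
          ≤ k * ∑ i, x i := by
            apply mul_le_mul_of_nonneg_left _ (by positivity)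
            apply Finset.sum_le_sum
            intro i _
            split
            · exact le_rfl
            · exact hx.1 i
        _ = k := by rw [hx.2, mul_one]
  · intro j j' hj
    unfold yOf
    apply mul_le_mul_of_nonneg_left _ (by positivity)
    apply Finset.sum_le_sum
    intro i _
    by_cases h : (i : ℕ) ≤ (j : ℕ)
    · rw [if_pos h, if_pos (by exact le_trans h hj)]
    · rw [if_neg h]
      split
      · exact hx.1 i
      · exact le_rfl

/-- Vertex `j` of the Kuhn cell determined by base point `z` and permutation `σ`. -/
noncomputable def wvtx (n : ℕ) (z : Fin n → ℤ) (σ : Equiv.Perm (Fin n)) (j : Fin (n + 1)) :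
    Fin n → ℝ := fun i => (z i : ℝ) + if ((σ.symm i : ℕ)) < (j : ℕ) then 1 else 0

/-- The region cut out by the cell `(z, σ)`. -/
def Rgn (n : ℕ) (z : Fin n → ℤ) (σ : Equiv.Perm (Fin n)) : Set (Fin n → ℝ) :=
  {y | (∀ i, (z i : ℝ) ≤ y i ∧ y i ≤ z i + 1) ∧
       ∀ a b : Fin n, a ≤ b → y (σ b) - z (σ b) ≤ y (σ a) - z (σ a)}

lemma wvtx_mem_Rgn (n : ℕ) (z : Fin n → ℤ) (σ : Equiv.Perm (Fin n)) (j : Fin (n + 1)) :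
    wvtx n z σ j ∈ Rgn n z σ := by
  constructor
  · intro i
    unfold wvtx
    constructor
    · split <;> norm_num
    · split <;> norm_num
  · intro a b hab
    unfold wvtx
    simp only [Equiv.symm_apply_apply, add_sub_cancel_left]
    split
    · rw [if_pos (by omega)]
    · split <;> norm_num

lemma Rgn_convex (n : ℕ) (z : Fin n → ℤ) (σ : Equiv.Perm (Fin n)) : Convex ℝ (Rgn n z σ) := by
  intro y hy y' hy' α β hα hβ hsum
  have hc : ∀ c : ℝ, α * c + β * c = c := by
    intro c; rw [← add_mul, hsum, one_mul]
  refine ⟨fun i => ⟨?_, ?_⟩, fun a b hab => ?_⟩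
  · have h1 := mul_le_mul_of_nonneg_left (hy.1 i).1 hα
    have h2 := mul_le_mul_of_nonneg_left (hy'.1 i).1 hβ
    simp only [Pi.add_apply, Pi.smul_apply, smul_eq_mul]
    linarith [hc ((z i : ℝ))]
  · have h1 := mul_le_mul_of_nonneg_left (hy.1 i).2 hα
    have h2 := mul_le_mul_of_nonneg_left (hy'.1 i).2 hβ
    simp only [Pi.add_apply, Pi.smul_apply, smul_eq_mul]
    have e1 : α * ((z i : ℝ) + 1) + β * ((z i : ℝ) + 1) = (z i : ℝ) + 1 := hc _
    linarith
  · have h1 := mul_le_mul_of_nonneg_left (hy.2 a b hab) hα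
    have h2 := mul_le_mul_of_nonneg_left (hy'.2 a b hab) hβ
    rw [mul_sub, mul_sub] at h1 h2
    simp only [Pi.add_apply, Pi.smul_apply, smul_eq_mul]
    linarith [hc ((z (σ a) : ℝ)), hc ((z (σ b) : ℝ))]

/-- Running coordinate used to define barycentric weights. -/
noncomputable def lamg (n : ℕ) (z : Fin n → ℤ) (σ : Equiv.Perm (Fin n)) (y : Fin n → ℝ) :
    ℕ → ℝ := fun j =>
  if h0 : j = 0 then 1
  else if h : j ≤ n then y (σ ⟨j - 1, by omega⟩) - z (σ ⟨j - 1, by omega⟩) else 0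

/-- Barycentric weight of vertex `j`. -/
noncomputable def lam (n : ℕ) (z : Fin n → ℤ) (σ : Equiv.Perm (Fin n)) (y : Fin n → ℝ)
    (j : Fin (n + 1)) : ℝ := lamg n z σ y j - lamg n z σ y (j + 1)

lemma lamg_antitone (n : ℕ) (z : Fin n → ℤ) (σ : Equiv.Perm (Fin n)) {y : Fin n → ℝ}
    (hy : y ∈ Rgn n z σ) {j : ℕ} (hj : j ≤ n) :
    lamg n z σ y (j + 1) ≤ lamg n z σ y j := by
  obtain ⟨h1, h2⟩ := hy
  unfold lamg
  rcases eq_or_ne j 0 with h | h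
  · subst h
    rw [dif_neg (show ¬ (0 + 1 = 0) by omega), dif_pos rfl]
    by_cases hn : 1 ≤ n
    · rw [dif_pos (show 0 + 1 ≤ n from hn)]
      linarith [(h1 (σ ⟨0 + 1 - 1, by omega⟩)).2]
    · rw [dif_neg (show ¬ (0 + 1 ≤ n) from hn)]
      norm_num
  · rw [dif_neg (show ¬ (j + 1 = 0) by omega), dif_neg h, dif_pos hj]
    by_cases hjn : j + 1 ≤ n
    · rw [dif_pos hjn]
      exact h2 ⟨j - 1, by omega⟩ ⟨j + 1 - 1, by omega⟩ (by simp only [Fin.mk_le_mk]; omega)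
    · rw [dif_neg hjn]
      linarith [(h1 (σ ⟨j - 1, by omega⟩)).1]

lemma lam_nonneg (n : ℕ) (z : Fin n → ℤ) (σ : Equiv.Perm (Fin n)) {y : Fin n → ℝ}
    (hy : y ∈ Rgn n z σ) (j : Fin (n + 1)) : 0 ≤ lam n z σ y j := by
  have := lamg_antitone n z σ hy (j := (j : ℕ)) (by omega)
  unfold lam
  linarith

lemma lamg_top (n : ℕ) (z : Fin n → ℤ) (σ : Equiv.Perm (Fin n)) (y : Fin n → ℝ) :
    lamg n z σ y (n + 1) = 0 := by
  unfold lamg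
  simp [show ¬ (n + 1 ≤ n) by omega]

lemma sum_lam (n : ℕ) (z : Fin n → ℤ) (σ : Equiv.Perm (Fin n)) (y : Fin n → ℝ) :
    ∑ j, lam n z σ y j = 1 := by
  unfold lam
  rw [Fin.sum_univ_eq_sum_range (fun j => lamg n z σ y j - lamg n z σ y (j + 1)),
    Finset.sum_range_sub' (lamg n z σ y), lamg_top]
  simp [lamg]

lemma lamg_val (n : ℕ) (z : Fin n → ℤ) (σ : Equiv.Perm (Fin n)) (y : Fin n → ℝ)
    {j : ℕ} (h0 : j ≠ 0) (hn : j ≤ n) :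
    lamg n z σ y j = y (σ ⟨j - 1, by omega⟩) - z (σ ⟨j - 1, by omega⟩) := by
  unfold lamg
  rw [dif_neg h0, dif_pos hn]

lemma sum_lam_smul (n : ℕ) (z : Fin n → ℤ) (σ : Equiv.Perm (Fin n)) {y : Fin n → ℝ}
    (hy : y ∈ Rgn n z σ) : ∑ j, lam n z σ y j • wvtx n z σ j = y := by
  funext i
  have hsum1 : ∑ j, lam n z σ y j = 1 := sum_lam n z σ y
  simp only [Finset.sum_apply, Pi.smul_apply, smul_eq_mul]
  unfold wvtx
  have expand : ∀ j : Fin (n + 1),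
      lam n z σ y j * ((z i : ℝ) + if ((σ.symm i : ℕ)) < (j : ℕ) then 1 else 0)
      = lam n z σ y j * (z i : ℝ)
        + lam n z σ y j * (if ((σ.symm i : ℕ)) < (j : ℕ) then 1 else 0) := by
    intro j; ring
  rw [Finset.sum_congr rfl (fun j _ => expand j), Finset.sum_add_distrib,
    ← Finset.sum_mul, hsum1, one_mul]
  set m : ℕ := (σ.symm i : ℕ) with hm
  have hmn : m < n := (σ.symm i).isLt
  have key : ∑ j : Fin (n + 1),
      lam n z σ y j * (if m < (j : ℕ) then 1 else 0) = lamg n z σ y (m + 1) := by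
    have hF : ∀ j : Fin (n + 1), lam n z σ y j * (if m < (j : ℕ) then 1 else 0)
        = (fun jn : ℕ => (lamg n z σ y jn - lamg n z σ y (jn + 1))
            * (if m < jn then 1 else 0)) (j : ℕ) := by
      intro j; rfl
    rw [Finset.sum_congr rfl (fun j _ => hF j),
      Fin.sum_univ_eq_sum_range (fun jn : ℕ => (lamg n z σ y jn - lamg n z σ y (jn + 1))
            * (if m < jn then 1 else 0)) (n + 1)]
    rw [← Finset.sum_subset (s₁ := Finset.Ico (m + 1) (n + 1))
      (by intro a ha; simp only [Finset.mem_Ico] at ha; simp only [Finset.mem_range]; omega)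
      (by intro a ha hna
          simp only [Finset.mem_Ico] at hna
          simp only [Finset.mem_range] at ha
          rw [if_neg (by omega), mul_zero])]
    have hdrop : ∀ x ∈ Finset.Ico (m + 1) (n + 1),
        (lamg n z σ y x - lamg n z σ y (x + 1)) * (if m < x then 1 else 0)
        = lamg n z σ y x - lamg n z σ y (x + 1) := by
      intro x hx
      simp only [Finset.mem_Ico] at hx
      rw [if_pos (by omega), mul_one]
    rw [Finset.sum_congr rfl hdrop, Finset.sum_Ico_eq_sub _ (by omega : m + 1 ≤ n + 1),
      Finset.sum_range_sub' (lamg n z σ y), Finset.sum_range_sub' (lamg n z σ y), lamg_top]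
    ring
  rw [key, lamg_val n z σ y (j := m + 1) (by omega) (by omega)]
  have : σ ⟨m + 1 - 1, by omega⟩ = i := by
    have : (⟨m + 1 - 1, by omega⟩ : Fin n) = σ.symm i := by
      apply Fin.ext; simp [hm]
    rw [this, Equiv.apply_symm_apply]
  rw [this]
  ring

/-- The canonical carrier candidates of `y`: integer points close to `y`. -/
def VC (n : ℕ) (y : Fin n → ℝ) : Set (Fin n → ℝ) :=
  {w | (∀ i, ∃ a : ℤ, w i = (a : ℝ)) ∧ (∀ i, -1 < y i - w i ∧ y i - w i < 1) ∧
       ∀ i i', (y i - w i) - (y i' - w i') < 1}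

lemma lamg_le_one (n : ℕ) (z : Fin n → ℤ) (σ : Equiv.Perm (Fin n)) {y : Fin n → ℝ}
    (hy : y ∈ Rgn n z σ) {j : ℕ} (hj : j ≤ n + 1) : lamg n z σ y j ≤ 1 := by
  unfold lamg
  rcases eq_or_ne j 0 with h | h
  · simp [h]
  · rw [dif_neg h]
    by_cases h2 : j ≤ n
    · rw [dif_pos h2]
      linarith [(hy.1 (σ ⟨j - 1, by omega⟩)).2]
    · rw [dif_neg h2]; norm_num

lemma lamg_nonneg (n : ℕ) (z : Fin n → ℤ) (σ : Equiv.Perm (Fin n)) {y : Fin n → ℝ}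
    (hy : y ∈ Rgn n z σ) (j : ℕ) : 0 ≤ lamg n z σ y j := by
  unfold lamg
  rcases eq_or_ne j 0 with h | h
  · simp [h]
  · rw [dif_neg h]
    by_cases h2 : j ≤ n
    · rw [dif_pos h2]
      linarith [(hy.1 (σ ⟨j - 1, by omega⟩)).1]
    · rw [dif_neg h2]

lemma hA_bound (n : ℕ) (z : Fin n → ℤ) (σ : Equiv.Perm (Fin n)) {y : Fin n → ℝ}
    (hy : y ∈ Rgn n z σ) {j : Fin (n + 1)} {i : Fin n} (h : ((σ.symm i : ℕ)) < (j : ℕ)) :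
    lamg n z σ y j ≤ y i - z i := by
  have hj0 : (j : ℕ) ≠ 0 := by omega
  have hjn : (j : ℕ) ≤ n := by
    have := (σ.symm i).isLt; omega
  rw [lamg_val n z σ y hj0 hjn]
  have := hy.2 (σ.symm i) ⟨(j : ℕ) - 1, by omega⟩ (by simp only [Fin.le_def]; omega)
  rwa [Equiv.apply_symm_apply] at this

lemma hB_bound (n : ℕ) (z : Fin n → ℤ) (σ : Equiv.Perm (Fin n)) {y : Fin n → ℝ}
    (hy : y ∈ Rgn n z σ) {j : Fin (n + 1)} {i : Fin n} (h : ¬ ((σ.symm i : ℕ)) < (j : ℕ)) :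
    y i - z i ≤ lamg n z σ y ((j : ℕ) + 1) := by
  have hjn : (j : ℕ) + 1 ≤ n := by
    have := (σ.symm i).isLt; omega
  rw [lamg_val n z σ y (by omega) hjn]
  have := hy.2 ⟨(j : ℕ) + 1 - 1, by omega⟩ (σ.symm i) (by simp only [Fin.le_def]; omega)
  rwa [Equiv.apply_symm_apply] at this

lemma wvtx_mem_VC (n : ℕ) (z : Fin n → ℤ) (σ : Equiv.Perm (Fin n)) {y : Fin n → ℝ}
    (hy : y ∈ Rgn n z σ) {j : Fin (n + 1)} (hpos : 0 < lam n z σ y j) :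
    wvtx n z σ j ∈ VC n y := by
  have hgap : lamg n z σ y ((j : ℕ) + 1) < lamg n z σ y j := by
    unfold lam at hpos; linarith
  have hup : ∀ i : Fin n, ((σ.symm i : ℕ)) < (j : ℕ) →
      0 < y i - z i ∧ lamg n z σ y j ≤ y i - z i := by
    intro i hi
    have h1 := hA_bound n z σ hy hi
    have h2 := lamg_nonneg n z σ hy ((j : ℕ) + 1)
    exact ⟨by linarith, h1⟩
  have hdown : ∀ i : Fin n, ¬ ((σ.symm i : ℕ)) < (j : ℕ) →
      y i - z i < 1 ∧ y i - z i ≤ lamg n z σ y ((j : ℕ) + 1) := by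
    intro i hi
    have h1 := hB_bound n z σ hy hi
    have h2 := lamg_le_one n z σ hy (j := (j : ℕ)) (by omega)
    exact ⟨by linarith, h1⟩
  refine ⟨?_, ?_, ?_⟩
  · intro i
    unfold wvtx
    by_cases h : ((σ.symm i : ℕ)) < (j : ℕ)
    · exact ⟨z i + 1, by rw [if_pos h]; push_cast; ring⟩
    · exact ⟨z i, by rw [if_neg h]; push_cast; ring⟩
  · intro i
    unfold wvtx
    by_cases h : ((σ.symm i : ℕ)) < (j : ℕ)
    · rw [if_pos h]
      have := (hup i h).1
      have h2 := (hy.1 i).2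
      constructor <;> [linarith; linarith]
    · rw [if_neg h]
      have := (hdown i h).1
      have h2 := (hy.1 i).1
      constructor <;> [linarith; linarith]
  · intro i i'
    unfold wvtx
    by_cases h : ((σ.symm i : ℕ)) < (j : ℕ) <;>
      by_cases h' : ((σ.symm i' : ℕ)) < (j : ℕ)
    · rw [if_pos h, if_pos h']
      have := (hup i' h').1
      have h2 := (hy.1 i).2
      linarith
    · rw [if_pos h, if_neg h']
      have := (hy.1 i).2
      have h2 := (hy.1 i').1
      linarith
    · rw [if_neg h, if_pos h']
      have h1 := (hdown i h).2
      have h2 := (hup i' h').2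
      linarith
    · rw [if_neg h, if_neg h']
      have := (hdown i h).1
      have h2 := (hy.1 i').1
      linarith

lemma downclosed_iff (n : ℕ) (B : Finset (Fin n))
    (h : ∀ a b : Fin n, a ≤ b → b ∈ B → a ∈ B) (p : Fin n) :
    p ∈ B ↔ (p : ℕ) < B.card := by
  constructor
  · intro hp
    have hsub : Finset.Iic p ⊆ B := by
      intro q hq
      exact h q p (Finset.mem_Iic.mp hq) hp
    have := Finset.card_le_card hsub
    rw [Fin.card_Iic] at this
    omega
  · intro hp
    by_contra hnp
    have hsub : B ⊆ Finset.Iio p := by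
      intro q hq
      rw [Finset.mem_Iio]
      rcases lt_or_ge q p with h' | h'
      · exact h'
      · exact absurd (h p q h' hq) hnp
    have := Finset.card_le_card hsub
    rw [Fin.card_Iio] at this
    omega

lemma eq_wvtx_of_mem_VC (n : ℕ) (z : Fin n → ℤ) (σ : Equiv.Perm (Fin n)) {y : Fin n → ℝ}
    (hy : y ∈ Rgn n z σ) {w : Fin n → ℝ} (hw : w ∈ VC n y) :
    ∃ j : Fin (n + 1), w = wvtx n z σ j := by
  classical
  obtain ⟨hint, hb, hcr⟩ := hw
  have h01 : ∀ i, w i = z i ∨ w i = z i + 1 := by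
    intro i
    obtain ⟨a, ha⟩ := hint i
    have hf1 := (hy.1 i).1
    have hf2 := (hy.1 i).2
    have hd1 := (hb i).1
    have hd2 := (hb i).2
    have hlow : (-1 : ℝ) < (a : ℝ) - z i := by linarith
    have hhigh : ((a : ℝ) - z i) < 2 := by linarith
    have hlow' : (-1 : ℤ) < a - z i := by exact_mod_cast hlow
    have hhigh' : (a - z i : ℤ) < 2 := by exact_mod_cast hhigh
    interval_cases h : (a - z i : ℤ)
    · left; rw [ha]; push_cast [show a = z i by omega]; ring
    · right; rw [ha]; push_cast [show a = z i + 1 by omega]; ring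
  set B : Finset (Fin n) := Finset.univ.filter (fun p => w (σ p) = (z (σ p) : ℝ) + 1) with hB
  have hdc : ∀ a b : Fin n, a ≤ b → b ∈ B → a ∈ B := by
    intro a b hab hbB
    simp only [hB, Finset.mem_filter, Finset.mem_univ, true_and] at hbB ⊢
    rcases h01 (σ a) with h0 | h1
    · exfalso
      have hcross := hcr (σ a) (σ b)
      rw [h0, hbB] at hcross
      have hsort := hy.2 a b hab
      push_cast at hcross
      linarith
    · exact h1
  have hcard : B.card ≤ n := le_trans (Finset.card_le_card (Finset.subset_univ B)) (by simp)
  refine ⟨⟨B.card, by omega⟩, ?_⟩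
  funext i
  unfold wvtx
  have hmem := downclosed_iff n B hdc (σ.symm i)
  by_cases h : ((σ.symm i : ℕ)) < B.card
  · rw [if_pos h]
    have : σ.symm i ∈ B := hmem.mpr h
    simp only [hB, Finset.mem_filter, Finset.mem_univ, true_and,
      Equiv.apply_symm_apply] at this
    exact this
  · rw [if_neg h]
    have hnot : σ.symm i ∉ B := fun hc => h (hmem.mp hc)
    simp only [hB, Finset.mem_filter, Finset.mem_univ, true_and,
      Equiv.apply_symm_apply] at hnot
    rw [add_zero]
    rcases h01 i with h0 | h1
    · exact h0
    · exact absurd h1 hnot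

noncomputable def Yl (n : ℕ) (j : ℕ) : (Fin n → ℝ) →ₗ[ℝ] ℝ :=
  if h : 1 ≤ j ∧ j ≤ n then LinearMap.proj (⟨j - 1, by omega⟩ : Fin n) else 0

lemma Y_eq (n k : ℕ) (y : Fin n → ℝ) (j : ℕ) :
    Y n k y j = Yl n j y + Y n k (0 : Fin n → ℝ) j := by
  unfold Y Yl
  rcases eq_or_ne j 0 with h | h
  · subst h; simp
  · by_cases h2 : j ≤ n
    · have h3 : 1 ≤ j ∧ j ≤ n := ⟨by omega, h2⟩
      simp [h, h2, h3]
    · have h3 : ¬ (1 ≤ j ∧ j ≤ n) := by omega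
      simp [h, h2, h3]

noncomputable def philin (n k : ℕ) : (Fin n → ℝ) →ₗ[ℝ] (Fin (n + 1) → ℝ) :=
  LinearMap.pi fun i : Fin (n + 1) => (k : ℝ)⁻¹ • (Yl n ((i : ℕ) + 1) - Yl n i)

noncomputable def phi (n k : ℕ) : (Fin n → ℝ) →ᵃ[ℝ] (Fin (n + 1) → ℝ) :=
  AffineMap.mk' (phiFun n k) (philin n k) 0 (by
    intro y
    funext i
    simp only [phiFun, philin, vsub_eq_sub, sub_zero, vadd_eq_add, Pi.add_apply,
      LinearMap.pi_apply, LinearMap.smul_apply, LinearMap.sub_apply, smul_eq_mul]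
    rw [Y_eq n k y (i + 1), Y_eq n k y i]
    field_simp
    ring)

lemma phi_apply (n k : ℕ) (y : Fin n → ℝ) : phi n k y = phiFun n k y := rfl

lemma phi_coe (n k : ℕ) : ⇑(phi n k) = phiFun n k := rfl

noncomputable def cellW (n : ℕ) (z : Fin n → ℤ) (σ : Equiv.Perm (Fin n)) :
    Finset (Fin n → ℝ) :=
  Finset.image (wvtx n z σ) Finset.univ

lemma coe_cellW (n : ℕ) (z : Fin n → ℤ) (σ : Equiv.Perm (Fin n)) :
    (cellW n z σ : Set (Fin n → ℝ)) = Set.range (wvtx n z σ) := by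
  simp [cellW]

lemma convexHull_cellW (n : ℕ) (z : Fin n → ℤ) (σ : Equiv.Perm (Fin n)) :
    convexHull ℝ (cellW n z σ : Set (Fin n → ℝ)) = Rgn n z σ := by
  apply le_antisymm
  · apply convexHull_min _ (Rgn_convex n z σ)
    rw [coe_cellW]
    rintro _ ⟨j, rfl⟩
    exact wvtx_mem_Rgn n z σ j
  · intro y hy
    rw [← sum_lam_smul n z σ hy]
    exact Convex.sum_mem (convex_convexHull ℝ _) (fun j _ => lam_nonneg n z σ hy j)
      (sum_lam n z σ y)
      (fun j _ => subset_convexHull ℝ _ (by rw [coe_cellW]; exact ⟨j, rfl⟩))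

lemma mem_hull_inter (n : ℕ) (z z' : Fin n → ℤ) (σ σ' : Equiv.Perm (Fin n)) {y : Fin n → ℝ}
    (hy : y ∈ Rgn n z σ) (hy' : y ∈ Rgn n z' σ') :
    y ∈ convexHull ℝ ((cellW n z σ ∩ cellW n z' σ' : Finset (Fin n → ℝ)) : Set (Fin n → ℝ)) := by
  classical
  set supp := Finset.univ.filter (fun j => lam n z σ y j ≠ 0) with hsupp
  have h1 : ∑ j ∈ supp, lam n z σ y j = 1 := by
    rw [hsupp, Finset.sum_filter_ne_zero, sum_lam]
  have hss : ∑ j ∈ supp, lam n z σ y j • wvtx n z σ j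
      = ∑ j : Fin (n + 1), lam n z σ y j • wvtx n z σ j := by
    apply Finset.sum_subset (Finset.filter_subset _ _)
    intro x _ hx
    simp only [hsupp, Finset.mem_filter, Finset.mem_univ, true_and, not_not] at hx
    rw [hx, zero_smul]
  have h2 : ∑ j ∈ supp, lam n z σ y j • wvtx n z σ j = y := by
    rw [hss, sum_lam_smul n z σ hy]
  rw [← h2]
  apply Convex.sum_mem (convex_convexHull ℝ _) (fun j _ => lam_nonneg n z σ hy j) h1
  intro j hj
  apply subset_convexHull
  simp only [Finset.coe_inter, Set.mem_inter_iff]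
  have hpos : 0 < lam n z σ y j := by
    simp only [hsupp, Finset.mem_filter, Finset.mem_univ, true_and] at hj
    exact lt_of_le_of_ne (lam_nonneg n z σ hy j) (Ne.symm hj)
  constructor
  · rw [Finset.mem_coe]
    exact Finset.mem_image.mpr ⟨j, Finset.mem_univ j, rfl⟩
  · have hvc := wvtx_mem_VC n z σ hy hpos
    obtain ⟨j', hj'⟩ := eq_wvtx_of_mem_VC n z' σ' hy' hvc
    rw [Finset.mem_coe, hj']
    exact Finset.mem_image.mpr ⟨j', Finset.mem_univ j', rfl⟩

lemma hull_inter_eq (n : ℕ) (z z' : Fin n → ℤ) (σ σ' : Equiv.Perm (Fin n)) :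
    convexHull ℝ (cellW n z σ : Set (Fin n → ℝ))
      ∩ convexHull ℝ (cellW n z' σ' : Set (Fin n → ℝ))
    = convexHull ℝ ((cellW n z σ ∩ cellW n z' σ' : Finset (Fin n → ℝ)) : Set (Fin n → ℝ)) := by
  apply le_antisymm
  · rintro y ⟨hy1, hy2⟩
    rw [convexHull_cellW] at hy1 hy2
    exact mem_hull_inter n z z' σ σ' hy1 hy2
  · apply Set.subset_inter
    · exact convexHull_mono (by intro x hx; simp only [Finset.coe_inter] at hx; exact hx.1)
    · exact convexHull_mono (by intro x hx; simp only [Finset.coe_inter] at hx; exact hx.2)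

/-- Cell of the triangulation of the standard simplex. -/
noncomputable def cellX (n k : ℕ) (z : Fin n → ℤ) (σ : Equiv.Perm (Fin n)) :
    Finset (Fin (n + 1) → ℝ) :=
  Finset.image (phiFun n k) (cellW n z σ)

lemma hull_cellX (n k : ℕ) (z : Fin n → ℤ) (σ : Equiv.Perm (Fin n)) :
    convexHull ℝ (cellX n k z σ : Set (Fin (n + 1) → ℝ))
      = phiFun n k '' Rgn n z σ := by
  rw [cellX, Finset.coe_image, ← phi_coe, ← AffineMap.image_convexHull, phi_coe,
    convexHull_cellW]

lemma cellX_face_to_face (n k : ℕ) (hk : k ≠ 0) (z z' : Fin n → ℤ)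
    (σ σ' : Equiv.Perm (Fin n)) :
    convexHull ℝ (cellX n k z σ : Set (Fin (n + 1) → ℝ))
      ∩ convexHull ℝ (cellX n k z' σ' : Set (Fin (n + 1) → ℝ))
    = convexHull ℝ ((cellX n k z σ ∩ cellX n k z' σ' : Finset (Fin (n + 1) → ℝ))
        : Set (Fin (n + 1) → ℝ)) := by
  classical
  have hinj := phiFun_injective n k hk
  have h := hull_inter_eq n z z' σ σ'
  rw [convexHull_cellW, convexHull_cellW] at h
  rw [hull_cellX, hull_cellX, ← Set.image_inter hinj, h, ← phi_coe,
    AffineMap.image_convexHull, phi_coe, ← Finset.coe_image,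
    Finset.image_inter _ _ hinj]
  rfl

lemma sum_ind (n : ℕ) (σ : Equiv.Perm (Fin n)) (j : Fin (n + 1)) :
    ∑ i : Fin n, (if ((σ.symm i : ℕ)) < (j : ℕ) then (1 : ℝ) else 0) = (j : ℕ) := by
  have h1 : ∑ i : Fin n, (if ((σ.symm i : ℕ)) < (j : ℕ) then (1 : ℝ) else 0)
      = ∑ p : Fin n, (if ((p : ℕ)) < (j : ℕ) then (1 : ℝ) else 0) :=
    Equiv.sum_comp σ.symm (fun p : Fin n => if ((p : ℕ)) < (j : ℕ) then (1 : ℝ) else 0)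
  rw [h1, Fin.sum_univ_eq_sum_range (fun p : ℕ => if p < (j : ℕ) then (1 : ℝ) else 0) n,
    ← Finset.sum_filter]
  have h2 : (Finset.range n).filter (fun p => p < (j : ℕ)) = Finset.range (j : ℕ) := by
    ext p
    simp only [Finset.mem_filter, Finset.mem_range]
    have := j.isLt
    omega
  rw [h2, Finset.sum_const, Finset.card_range, nsmul_eq_mul, mul_one]

lemma wvtx_injective (n : ℕ) (z : Fin n → ℤ) (σ : Equiv.Perm (Fin n)) :
    Function.Injective (wvtx n z σ) := by
  intro j j' h
  have hs : ∀ j'' : Fin (n + 1), ∑ i, (wvtx n z σ j'' i - (z i : ℝ)) = ((j'' : ℕ) : ℝ) := by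
    intro j''
    have : ∀ i : Fin n, wvtx n z σ j'' i - (z i : ℝ)
        = if ((σ.symm i : ℕ)) < ((j'' : ℕ)) then (1 : ℝ) else 0 := by
      intro i; unfold wvtx; ring
    rw [Finset.sum_congr rfl (fun i _ => this i), sum_ind n σ j'']
  have h1 := hs j
  rw [h] at h1
  rw [hs j'] at h1
  have : (j' : ℕ) = (j : ℕ) := by exact_mod_cast h1
  have := this.symm
  exact Fin.ext this

lemma vtxX_injective (n k : ℕ) (hk : k ≠ 0) (z : Fin n → ℤ) (σ : Equiv.Perm (Fin n)) :
    Function.Injective (fun j => phiFun n k (wvtx n z σ j)) :=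
  fun _ _ h => wvtx_injective n z σ (phiFun_injective n k hk h)

lemma card_cellX (n k : ℕ) (hk : k ≠ 0) (z : Fin n → ℤ) (σ : Equiv.Perm (Fin n)) :
    (cellX n k z σ).card = n + 1 := by
  classical
  rw [cellX, Finset.card_image_of_injective _ (phiFun_injective n k hk),
    cellW, Finset.card_image_of_injective _ (wvtx_injective n z σ)]
  simp

lemma wvtx_affineIndependent (n : ℕ) (z : Fin n → ℤ) (σ : Equiv.Perm (Fin n)) :
    AffineIndependent ℝ (wvtx n z σ) := by
  classical
  rw [affineIndependent_iff]
  intro s w hsum hzero e he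
  set W : Fin (n + 1) → ℝ := fun j => if j ∈ s then w j else 0 with hW
  have hWsum : ∑ j, W j = 0 := by
    rw [hW, Finset.sum_ite_mem, Finset.univ_inter, hsum]
  have hWzero : ∑ j, W j • wvtx n z σ j = 0 := by
    rw [hW]
    rw [show ∑ j, (if j ∈ s then w j else 0) • wvtx n z σ j
        = ∑ j, (if j ∈ s then w j • wvtx n z σ j else 0) from
      Finset.sum_congr rfl (fun j _ => by split <;> simp)]
    rw [Finset.sum_ite_mem, Finset.univ_inter]
    exact hzero
  -- tail sums
  set T : ℕ → ℝ := fun m => ∑ j ∈ Finset.univ.filter (fun j : Fin (n + 1) => m < (j : ℕ)), W j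
    with hT
  have hTp : ∀ p : Fin n, T (p : ℕ) = 0 := by
    intro p
    have hcoord := congrFun hWzero (σ p)
    simp only [Finset.sum_apply, Pi.smul_apply, smul_eq_mul, Pi.zero_apply] at hcoord
    unfold wvtx at hcoord
    have hre : ∑ x : Fin (n + 1),
        W x * ((z (σ p) : ℝ) + if ((σ.symm (σ p) : ℕ)) < (x : ℕ) then 1 else 0)
        = ∑ x : Fin (n + 1),
          (W x * (z (σ p) : ℝ) + W x * (if ((p : ℕ)) < (x : ℕ) then 1 else 0)) :=
      Finset.sum_congr rfl (fun x _ => by rw [Equiv.symm_apply_apply]; ring)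
    rw [hre, Finset.sum_add_distrib, ← Finset.sum_mul, hWsum, zero_mul, zero_add] at hcoord
    show (∑ j ∈ Finset.univ.filter (fun j' : Fin (n + 1) => ((p : ℕ)) < (j' : ℕ)), W j) = 0
    rw [Finset.sum_filter]
    rw [show ∑ j : Fin (n + 1), (if ((p : ℕ)) < (j : ℕ) then W j else 0)
        = ∑ j : Fin (n + 1), W j * (if ((p : ℕ)) < (j : ℕ) then 1 else 0) from
      Finset.sum_congr rfl (fun j _ => by split <;> simp)]
    exact hcoord
  have hTz : ∀ m : ℕ, T m = 0 := by
    intro m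
    rcases lt_or_ge m n with h | h
    · exact hTp ⟨m, h⟩
    · have hempty : Finset.univ.filter (fun j' : Fin (n + 1) => m < (j' : ℕ)) = ∅ := by
        ext j'
        simp only [Finset.mem_filter, Finset.mem_univ, true_and, Finset.notMem_empty,
          iff_false, not_lt]
        have := j'.isLt
        omega
      show (∑ j ∈ Finset.univ.filter (fun j' : Fin (n + 1) => m < (j' : ℕ)), W j) = 0
      rw [hempty, Finset.sum_empty]
  have hall : ∀ j : Fin (n + 1), W j = 0 := by
    intro j
    rcases Nat.eq_zero_or_pos (j : ℕ) with h0 | h0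
    · have huniv : (Finset.univ : Finset (Fin (n + 1)))
          = insert j (Finset.univ.filter (fun j' : Fin (n + 1) => (0 : ℕ) < (j' : ℕ))) := by
        ext j'
        simp only [Finset.mem_univ, Finset.mem_insert, Finset.mem_filter, true_and, true_iff,
          Fin.ext_iff]
        omega
      have hnotin : j ∉ Finset.univ.filter (fun j' : Fin (n + 1) => (0 : ℕ) < (j' : ℕ)) := by
        simp [h0]
        exact Fin.ext (by simpa using h0)
      have hsplit : (0 : ℝ) = W j + T 0 := by
        rw [← hWsum]
        show (∑ j' : Fin (n + 1), W j')
            = W j + ∑ j' ∈ Finset.univ.filter (fun j' : Fin (n + 1) => (0 : ℕ) < (j' : ℕ)), W j'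
        conv_lhs => rw [huniv]
        rw [Finset.sum_insert hnotin]
      have := hTz 0
      linarith
    · have hid : Finset.univ.filter (fun j' : Fin (n + 1) => ((j : ℕ) - 1) < (j' : ℕ))
          = insert j (Finset.univ.filter (fun j' : Fin (n + 1) => (j : ℕ) < (j' : ℕ))) := by
        ext j'
        simp only [Finset.mem_filter, Finset.mem_univ, true_and, Finset.mem_insert, Fin.ext_iff]
        omega
      have hnotin : j ∉ Finset.univ.filter (fun j' : Fin (n + 1) => (j : ℕ) < (j' : ℕ)) := by
        simp
      have hsplit : T ((j : ℕ) - 1) = W j + T (j : ℕ) := by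
        show (∑ j' ∈ Finset.univ.filter (fun j' : Fin (n + 1) => ((j : ℕ) - 1) < (j' : ℕ)), W j')
            = W j + ∑ j' ∈ Finset.univ.filter (fun j' : Fin (n + 1) => ((j : ℕ)) < (j' : ℕ)), W j'
        rw [hid, Finset.sum_insert hnotin]
      rw [hTz, hTz] at hsplit
      linarith
  have := hall e
  rw [hW] at this
  simpa [he] using this

lemma cellX_affineIndependent (n k : ℕ) (hk : k ≠ 0) (z : Fin n → ℤ) (σ : Equiv.Perm (Fin n)) :
    AffineIndependent ℝ (Subtype.val : {x // x ∈ cellX n k z σ} → (Fin (n + 1) → ℝ)) := by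
  have h1 : AffineIndependent ℝ (⇑(phi n k) ∘ wvtx n z σ) :=
    (wvtx_affineIndependent n z σ).map' (phi n k)
      (by rw [phi_coe]; exact phiFun_injective n k hk)
  have h2 := h1.range
  have hEq : (Set.range (⇑(phi n k) ∘ wvtx n z σ)) = ((cellX n k z σ : Set (Fin (n + 1) → ℝ))) := by
    rw [Set.range_comp, cellX, Finset.coe_image, coe_cellW, phi_coe]
  rw [hEq] at h2
  exact h2

lemma Sk_convex (n k : ℕ) : Convex ℝ (Sk n k) := by
  intro y hy y' hy' α β hα hβ hsum
  have hc : ∀ c : ℝ, α * c + β * c = c := by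
    intro c; rw [← add_mul, hsum, one_mul]
  refine ⟨fun i => ⟨?_, ?_⟩, fun a b hab => ?_⟩
  · have h1 := mul_le_mul_of_nonneg_left (hy.1 i).1 hα
    have h2 := mul_le_mul_of_nonneg_left (hy'.1 i).1 hβ
    simp only [Pi.add_apply, Pi.smul_apply, smul_eq_mul]
    nlinarith
  · have h1 := mul_le_mul_of_nonneg_left (hy.1 i).2 hα
    have h2 := mul_le_mul_of_nonneg_left (hy'.1 i).2 hβ
    simp only [Pi.add_apply, Pi.smul_apply, smul_eq_mul]
    linarith [hc ((k : ℝ))]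
  · have h1 := mul_le_mul_of_nonneg_left (hy.2 a b hab) hα
    have h2 := mul_le_mul_of_nonneg_left (hy'.2 a b hab) hβ
    simp only [Pi.add_apply, Pi.smul_apply, smul_eq_mul]
    linarith

/-- Admissibility: all vertices of the cell lie in the (scaled) simplex region. -/
def Adm (n k : ℕ) (z : Fin n → ℤ) (σ : Equiv.Perm (Fin n)) : Prop :=
  ∀ j : Fin (n + 1), wvtx n z σ j ∈ Sk n k

lemma Adm_z_bounds (n k : ℕ) {z : Fin n → ℤ} {σ : Equiv.Perm (Fin n)} (hAdm : Adm n k z σ) :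
    ∀ i, 0 ≤ z i ∧ z i ≤ k := by
  intro i
  have h := (hAdm 0).1 i
  unfold wvtx at h
  rw [if_neg (by simp)] at h
  rw [add_zero] at h
  constructor
  · exact_mod_cast h.1
  · exact_mod_cast h.2

lemma Rgn_subset_Sk (n k : ℕ) {z : Fin n → ℤ} {σ : Equiv.Perm (Fin n)} (hAdm : Adm n k z σ) :
    Rgn n z σ ⊆ Sk n k := by
  rw [← convexHull_cellW]
  apply convexHull_min _ (Sk_convex n k)
  rw [coe_cellW]
  rintro _ ⟨j, rfl⟩
  exact hAdm j

lemma hull_cellX_subset (n k : ℕ) (hk : k ≠ 0) {z : Fin n → ℤ} {σ : Equiv.Perm (Fin n)}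
    (hAdm : Adm n k z σ) :
    convexHull ℝ (cellX n k z σ : Set (Fin (n + 1) → ℝ)) ⊆ stdSimplex ℝ (Fin (n + 1)) := by
  rw [hull_cellX]
  rintro _ ⟨y, hy, rfl⟩
  exact phi_mem_stdSimplex n k hk (Rgn_subset_Sk n k hAdm hy)

open Classical in
/-- All admissible cells: a finite set. -/
noncomputable def triCells (n k : ℕ) : Finset (Finset (Fin (n + 1) → ℝ)) :=
  (Finset.univ.filter (fun p : (Fin n → Fin (k + 1)) × Equiv.Perm (Fin n) =>
      Adm n k (fun i => ((p.1 i : ℕ) : ℤ)) p.2)).image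
    (fun p => cellX n k (fun i => ((p.1 i : ℕ) : ℤ)) p.2)

lemma mem_triCells (n k : ℕ) {s : Finset (Fin (n + 1) → ℝ)} (hs : s ∈ triCells n k) :
    ∃ (z : Fin n → ℤ) (σ : Equiv.Perm (Fin n)), Adm n k z σ ∧ s = cellX n k z σ := by
  classical
  obtain ⟨p, hp, rfl⟩ := Finset.mem_image.mp hs
  rw [Finset.mem_filter] at hp
  exact ⟨_, _, hp.2, rfl⟩

lemma cellX_mem_triCells (n k : ℕ) {z : Fin n → ℤ} {σ : Equiv.Perm (Fin n)}
    (hAdm : Adm n k z σ) : cellX n k z σ ∈ triCells n k := by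
  classical
  have hz := Adm_z_bounds n k hAdm
  set z' : Fin n → Fin (k + 1) := fun i => ⟨(z i).toNat, by
    have := hz i; omega⟩ with hz'
  have hzz : (fun i => ((z' i : ℕ) : ℤ)) = z := by
    funext i
    simp only [hz']
    rw [Int.toNat_of_nonneg (hz i).1]
  apply Finset.mem_image.mpr
  refine ⟨(z', σ), ?_, ?_⟩
  · rw [Finset.mem_filter]
    exact ⟨Finset.mem_univ _, by rw [hzz]; exact hAdm⟩
  · rw [hzz]

lemma exists_cell (n k : ℕ) (hk : 0 < k) {y : Fin n → ℝ} (hy : y ∈ Sk n k) :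
    ∃ (z : Fin n → ℤ) (σ : Equiv.Perm (Fin n)), Adm n k z σ ∧ y ∈ Rgn n z σ := by
  classical
  set z : Fin n → ℤ := fun i => min ⌊y i⌋ ((k : ℤ) - 1) with hz
  set κ : Fin n → ℝ ×ₗ ℕ := fun i => toLex ((z i : ℝ) - y i, n - (i : ℕ)) with hκ
  set σ : Equiv.Perm (Fin n) := Tuple.sort κ with hσ
  have hmono : Monotone (κ ∘ σ) := Tuple.monotone_sort κ
  have hκinj : Function.Injective κ := by
    intro a b hab
    have h2 : ((z a : ℝ) - y a, n - (a : ℕ)) = ((z b : ℝ) - y b, n - (b : ℕ)) :=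
      toLex.injective hab
    have h3 : n - (a : ℕ) = n - (b : ℕ) := congrArg Prod.snd h2
    have ha := a.isLt
    have hb := b.isLt
    exact Fin.ext (by omega)
  have hstrict : StrictMono (κ ∘ σ) :=
    hmono.strictMono_of_injective (hκinj.comp σ.injective)
  have hzb : ∀ i, 0 ≤ z i ∧ z i + 1 ≤ k := by
    intro i
    constructor
    · rw [hz]
      apply le_min
      · exact Int.floor_nonneg.mpr (hy.1 i).1
      · omega
    · have : z i ≤ (k : ℤ) - 1 := min_le_right _ _
      omega
  have hfb : ∀ i, (z i : ℝ) ≤ y i ∧ y i ≤ (z i : ℝ) + 1 := by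
    intro i
    constructor
    · calc (z i : ℝ) ≤ (⌊y i⌋ : ℝ) := by exact_mod_cast min_le_left _ _
        _ ≤ y i := Int.floor_le _
    · rcases le_or_gt (⌊y i⌋) ((k : ℤ) - 1) with h | h
      · have hmin : z i = ⌊y i⌋ := min_eq_left h
        rw [hmin]
        linarith [Int.lt_floor_add_one (y i)]
      · have hmin : z i = (k : ℤ) - 1 := min_eq_right (by omega)
        rw [hmin]
        push_cast
        linarith [(hy.1 i).2]
  have hsort : ∀ a b : Fin n, a ≤ b → y (σ b) - z (σ b) ≤ y (σ a) - z (σ a) := by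
    intro a b hab
    have h := hmono hab
    simp only [Function.comp_apply, hκ] at h
    rcases (Prod.Lex.le_iff).mp h with h1 | ⟨h1, _⟩
    · simp only [ofLex_toLex] at h1
      linarith
    · simp only [ofLex_toLex] at h1
      have : (z (σ a) : ℝ) - y (σ a) = (z (σ b) : ℝ) - y (σ b) := h1
      linarith
  have hyR : y ∈ Rgn n z σ := ⟨hfb, hsort⟩
  have hzmono : ∀ i i' : Fin n, i ≤ i' → z i ≤ z i' := by
    intro i i' h
    rw [hz]
    exact min_le_min (Int.floor_le_floor (hy.2 i i' h)) le_rfl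
  have hAdm : Adm n k z σ := by
    intro j
    constructor
    · intro i
      unfold wvtx
      have h1 := hzb i
      by_cases h : ((σ.symm i : ℕ)) < (j : ℕ)
      · rw [if_pos h]
        have c1 : (0 : ℝ) ≤ (z i : ℝ) := by exact_mod_cast h1.1
        have c2 : (z i : ℝ) + 1 ≤ (k : ℝ) := by exact_mod_cast h1.2
        constructor <;> linarith
      · rw [if_neg h, add_zero]
        have c1 : (0 : ℝ) ≤ (z i : ℝ) := by exact_mod_cast h1.1
        have c2 : (z i : ℝ) + 1 ≤ (k : ℝ) := by exact_mod_cast h1.2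
        constructor <;> linarith
    · intro i i' hii
      unfold wvtx
      by_cases hzz : z i = z i'
      · -- equal bases: indicator must be monotone
        rw [hzz]
        have hind : (if ((σ.symm i : ℕ)) < (j : ℕ) then (1 : ℝ) else 0)
            ≤ (if ((σ.symm i' : ℕ)) < (j : ℕ) then (1 : ℝ) else 0) := by
          by_cases h : ((σ.symm i : ℕ)) < (j : ℕ)
          · rw [if_pos h]
            by_cases h' : ((σ.symm i' : ℕ)) < (j : ℕ)
            · rw [if_pos h']
            · exfalso
              have hpp : σ.symm i < σ.symm i' := by
                rw [Fin.lt_def]; omega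
              have hlt := hstrict hpp
              simp only [Function.comp_apply, Equiv.apply_symm_apply, hκ] at hlt
              rcases (Prod.Lex.lt_iff).mp hlt with h2 | ⟨h2, h3⟩
              · simp only [ofLex_toLex] at h2
                have heq : (z i : ℝ) = (z i') := by exact_mod_cast hzz
                have hyy := hy.2 i i' hii
                linarith
              · simp only [ofLex_toLex] at h3
                have hi := i.isLt
                have hi' := i'.isLt
                have : i ≠ i' := by
                  intro hc
                  subst hc
                  exact lt_irrefl _ hpp
                have : (i : ℕ) < (i' : ℕ) := by
                  rcases lt_or_eq_of_le hii with hlt2 | heq2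
                  · exact hlt2
                  · exact absurd heq2 this
                omega
          · rw [if_neg h]
            split
            · norm_num
            · exact le_rfl
        linarith
      · have hlt : z i + 1 ≤ z i' := by
          have := hzmono i i' hii
          omega
        have hc : (z i : ℝ) + 1 ≤ (z i' : ℝ) := by exact_mod_cast hlt
        have e1 : (if ((σ.symm i : ℕ)) < (j : ℕ) then (1 : ℝ) else 0) ≤ 1 := by
          split <;> norm_num
        have e2 : (0 : ℝ) ≤ (if ((σ.symm i' : ℕ)) < (j : ℕ) then (1 : ℝ) else 0) := by
          split <;> norm_num
        linarith
  exact ⟨z, σ, hAdm, hyR⟩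

lemma triCells_covers (n k : ℕ) (hk : 0 < k) :
    (⋃ s ∈ triCells n k, convexHull ℝ (s : Set (Fin (n + 1) → ℝ)))
      = stdSimplex ℝ (Fin (n + 1)) := by
  apply le_antisymm
  · apply Set.iUnion₂_subset
    intro s hs
    obtain ⟨z, σ, hAdm, rfl⟩ := mem_triCells n k hs
    exact hull_cellX_subset n k (by omega) hAdm
  · intro x hx
    have hy := yOf_mem_Sk n k hx
    obtain ⟨z, σ, hAdm, hyR⟩ := exists_cell n k hk hy
    apply Set.mem_biUnion (cellX_mem_triCells n k hAdm)
    rw [hull_cellX]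
    exact ⟨yOf n k x, hyR, phiFun_yOf n k (by omega) hx⟩

lemma Ydiff_bound (n k : ℕ) (z : Fin n → ℤ) (σ : Equiv.Perm (Fin n)) (j j' : Fin (n + 1))
    (m : ℕ) : |Y n k (wvtx n z σ j) m - Y n k (wvtx n z σ j') m| ≤ 1 := by
  unfold Y
  rcases eq_or_ne m 0 with h | h
  · simp [h]
  · by_cases h2 : m ≤ n
    · rw [dif_neg h, dif_neg h, dif_pos h2, dif_pos h2]
      unfold wvtx
      have : ∀ b : Prop, ∀ inst : Decidable b, (0:ℝ) ≤ (if b then (1:ℝ) else 0) ∧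
          (if b then (1:ℝ) else 0) ≤ 1 := by
        intro b inst; split <;> norm_num
      rcases this (((σ.symm ⟨m - 1, by omega⟩ : Fin n) : ℕ) < (j : ℕ)) _ with ⟨a1, a2⟩
      rcases this (((σ.symm ⟨m - 1, by omega⟩ : Fin n) : ℕ) < (j' : ℕ)) _ with ⟨b1, b2⟩
      rw [abs_le]
      constructor <;> [linarith; linarith]
    · rw [dif_neg h, dif_neg h, dif_neg h2, dif_neg h2]
      simp

lemma mesh_bound (n k : ℕ) (hk : 0 < k) (z : Fin n → ℤ) (σ : Equiv.Perm (Fin n))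
    {u v : Fin (n + 1) → ℝ} (hu : u ∈ cellX n k z σ) (hv : v ∈ cellX n k z σ) :
    dist u v ≤ 2 / k := by
  have hkR : (0:ℝ) < k := by positivity
  obtain ⟨wu, hwu, rfl⟩ := Finset.mem_image.mp hu
  obtain ⟨wv, hwv, rfl⟩ := Finset.mem_image.mp hv
  obtain ⟨j, _, rfl⟩ := Finset.mem_image.mp hwu
  obtain ⟨j', _, rfl⟩ := Finset.mem_image.mp hwv
  rw [dist_pi_le_iff (by positivity)]
  intro i
  rw [Real.dist_eq]
  unfold phiFun
  have h1 := Ydiff_bound n k z σ j j' ((i : ℕ) + 1)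
  have h2 := Ydiff_bound n k z σ j j' (i : ℕ)
  rw [div_sub_div_same, abs_div, abs_of_pos hkR]
  have h1' := abs_le.mp h1
  have h2' := abs_le.mp h2
  gcongr
  rw [abs_le]
  constructor <;> linarith

end KKMproof

open KKMproof in
/-- The Kuhn/Freudenthal triangulation of the standard simplex at scale `1/k`. -/
noncomputable def KKMtri (n k : ℕ) (hk : 0 < k) : Triangulation n where
  cells := triCells n k
  card_cells := fun s hs => by
    obtain ⟨z, σ, _, rfl⟩ := mem_triCells n k hs
    exact card_cellX n k (by omega) z σ
  indep := fun s hs => by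
    obtain ⟨z, σ, _, rfl⟩ := mem_triCells n k hs
    exact cellX_affineIndependent n k (by omega) z σ
  covers := triCells_covers n k hk
  face_to_face := fun s hs t ht => by
    obtain ⟨z, σ, _, rfl⟩ := mem_triCells n k hs
    obtain ⟨z', σ', _, rfl⟩ := mem_triCells n k ht
    exact cellX_face_to_face n k (by omega) z z' σ σ'

open KKMproof in
/-- Sperner's lemma implies the KKM lemma in dimension `n`. -/
theorem sperner_implies_kkm (n : ℕ)
    (sperner : ∀ T : Triangulation n, ∀ L : (Fin (n + 1) → ℝ) → Fin (n + 1),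
      IsSpernerLabelling T L →
        ∃ s ∈ T.cells, s.image L = (Finset.univ : Finset (Fin (n + 1))))
    (C : Fin (n + 1) → Set (Fin (n + 1) → ℝ)) (hC : ∀ i, IsClosed (C i))
    (hface : ∀ I : Finset (Fin (n + 1)),
      {x ∈ stdSimplex ℝ (Fin (n + 1)) | ∀ i ∉ I, x i = 0} ⊆ ⋃ i ∈ I, C i) :
    ∃ x ∈ stdSimplex ℝ (Fin (n + 1)), ∀ i, x ∈ C i := by
  classical
  by_contra hcon
  push_neg at hcon
  -- basis vectors lie in the simplex
  have hbasis : ∀ i : Fin (n + 1),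
      (fun j => if j = i then (1 : ℝ) else 0) ∈ stdSimplex ℝ (Fin (n + 1)) := by
    intro i
    constructor
    · intro j; dsimp only; split <;> norm_num
    · simp
  -- each C i is nonempty
  have hCne : ∀ i, (C i).Nonempty := by
    intro i
    have hmem : (fun j => if j = i then (1 : ℝ) else 0) ∈
        {x ∈ stdSimplex ℝ (Fin (n + 1)) | ∀ j ∉ ({i} : Finset (Fin (n + 1))), x j = 0} := by
      refine ⟨hbasis i, ?_⟩
      intro j hj
      simp only [Finset.mem_singleton] at hj
      dsimp only
      rw [if_neg hj]
    have h2 := hface {i} hmem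
    simp only [Finset.mem_singleton, Set.iUnion_iUnion_eq_left] at h2
    exact ⟨_, h2⟩
  -- every simplex point has a valid label
  have hex : ∀ v ∈ stdSimplex ℝ (Fin (n + 1)), ∃ i, 0 < v i ∧ v ∈ C i := by
    intro v hv
    have hmem : v ∈ {x ∈ stdSimplex ℝ (Fin (n + 1)) |
        ∀ i ∉ Finset.univ.filter (fun i => v i ≠ 0), x i = 0} := by
      refine ⟨hv, ?_⟩
      intro i hi
      simp only [Finset.mem_filter, Finset.mem_univ, true_and, not_not] at hi
      exact hi
    have h2 := hface _ hmem
    rw [Set.mem_iUnion₂] at h2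
    obtain ⟨i, hiI, hvC⟩ := h2
    simp only [Finset.mem_filter, Finset.mem_univ, true_and] at hiI
    exact ⟨i, lt_of_le_of_ne (hv.1 i) (Ne.symm hiI), hvC⟩
  set L : (Fin (n + 1) → ℝ) → Fin (n + 1) :=
    fun v => if h : ∃ i, 0 < v i ∧ v ∈ C i then h.choose else 0 with hL
  -- the "total distance" function and its positive minimum on the simplex
  set g : (Fin (n + 1) → ℝ) → ℝ := fun x => ∑ i, Metric.infDist x (C i) with hg
  have hgcont : Continuous g := by
    apply continuous_finset_sum
    intro i _
    exact Metric.continuous_infDist_pt (C i)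
  have hΔc : IsCompact (stdSimplex ℝ (Fin (n + 1))) := isCompact_stdSimplex _ _
  have hΔne : (stdSimplex ℝ (Fin (n + 1))).Nonempty := ⟨_, hbasis 0⟩
  obtain ⟨x₀, hx₀, hmin⟩ := hΔc.exists_isMinOn hΔne hgcont.continuousOn
  have hδpos : 0 < g x₀ := by
    have hnn : 0 ≤ g x₀ := Finset.sum_nonneg fun i _ => Metric.infDist_nonneg
    rcases eq_or_lt_of_le hnn with h0 | h0
    · exfalso
      have hz : ∀ i, Metric.infDist x₀ (C i) = 0 := by
        have := (Finset.sum_eq_zero_iff_of_nonneg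
          (fun i _ => Metric.infDist_nonneg)).mp h0.symm
        exact fun i => this i (Finset.mem_univ i)
      have hmem : ∀ i, x₀ ∈ C i :=
        fun i => ((hC i).mem_iff_infDist_zero (hCne i)).mpr (hz i)
      obtain ⟨i, hi⟩ := hcon x₀ hx₀
      exact hi (hmem i)
    · exact h0
  obtain ⟨k, hkgt⟩ := exists_nat_gt (((n : ℝ) + 1) * 2 / g x₀)
  have hk0 : 0 < k := by
    by_contra h
    have hk00 : k = 0 := by omega
    rw [hk00] at hkgt
    have : (0 : ℝ) ≤ ((n : ℝ) + 1) * 2 / g x₀ := by positivity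
    norm_num at hkgt
    linarith
  set T := KKMtri n k hk0 with hT
  have hcells : T.cells = triCells n k := rfl
  have hsubΔ : ∀ s ∈ triCells n k, (s : Set (Fin (n + 1) → ℝ)) ⊆ stdSimplex ℝ (Fin (n + 1)) := by
    intro s hs
    obtain ⟨z, σ, hAdm, rfl⟩ := mem_triCells n k hs
    exact (subset_convexHull ℝ _).trans (hull_cellX_subset n k (by omega) hAdm)
  have hlab : IsSpernerLabelling T L := by
    intro v hv
    obtain ⟨s, hs, hvs⟩ := Finset.mem_sup.mp hv
    have hvΔ : v ∈ stdSimplex ℝ (Fin (n + 1)) := hsubΔ s hs hvs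
    have h := hex v hvΔ
    rw [hL]
    dsimp only
    rw [dif_pos h]
    exact h.choose_spec.1
  obtain ⟨s, hs, hrain⟩ := sperner T L hlab
  rw [hcells] at hs
  have hvert : ∀ i : Fin (n + 1), ∃ v, v ∈ s ∧ L v = i := by
    intro i
    have : i ∈ s.image L := by rw [hrain]; exact Finset.mem_univ i
    obtain ⟨v, hvs, hLv⟩ := Finset.mem_image.mp this
    exact ⟨v, hvs, hLv⟩
  choose v hvs hvL using hvert
  have hvC : ∀ i, v i ∈ C i := by
    intro i
    have hvΔ : v i ∈ stdSimplex ℝ (Fin (n + 1)) := hsubΔ s hs (hvs i)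
    have h := hex (v i) hvΔ
    have hchoice : L (v i) = h.choose := by rw [hL]; dsimp only; rw [dif_pos h]
    have h2 := h.choose_spec.2
    rw [← hchoice] at h2
    rw [hvL i] at h2
    exact h2
  obtain ⟨z, σ, hAdm, rfl⟩ := mem_triCells n k hs
  have hdist : ∀ i, Metric.infDist (v 0) (C i) ≤ 2 / k := fun i =>
    le_trans (Metric.infDist_le_dist_of_mem (hvC i))
      (mesh_bound n k hk0 z σ (hvs 0) (hvs i))
  have hgle : g (v 0) ≤ ((n : ℝ) + 1) * (2 / k) := by
    rw [hg]
    dsimp only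
    calc ∑ i, Metric.infDist (v 0) (C i) ≤ ∑ _i : Fin (n + 1), 2 / (k : ℝ) :=
          Finset.sum_le_sum fun i _ => hdist i
      _ = ((n : ℝ) + 1) * (2 / k) := by
          rw [Finset.sum_const, Finset.card_univ, Fintype.card_fin, nsmul_eq_mul]
          push_cast
          ring
  have hless : ((n : ℝ) + 1) * (2 / k) < g x₀ := by
    have hmul : ((n : ℝ) + 1) * 2 < k * g x₀ := (div_lt_iff₀ hδpos).mp hkgt
    have hkR : (0 : ℝ) < k := by exact_mod_cast hk0
    rw [show ((n : ℝ) + 1) * (2 / k) = (((n : ℝ) + 1) * 2) / k by ring,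
      div_lt_iff₀ hkR]
    linarith
  have hminle : g x₀ ≤ g (v 0) := isMinOn_iff.mp hmin _ (hsubΔ _ hs (hvs 0))
  linarith
end
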